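/- arXiv:2103.11960 — 7 statements merged into one kernel-verified Lean document; each statement's English description precedes it below -/
import Mathlib

section
/- The sum over n from 1 to infinity of (1/(n·4^n))·C(2n,n) equals ln 4. -/
open Finset Real

noncomputable def H (n : ℕ) : ℝ := ∑ i ∈ Finset.range n, 1/((i:ℝ)+1)

noncomputable def H2 (n : ℕ) : ℝ := ∑ i ∈ Finset.range n, 1/((i:ℝ)+1)^2

noncomputable def H3 (n : ℕ) : ℝ := ∑ i ∈ Finset.range n, 1/((i:ℝ)+1)^3

noncomputable def hh (r n : ℕ) : ℝ := (Nat.choose (n+r-1) (r-1)) * (H (n+r-1) - H (r-1))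

noncomputable def zeta3 : ℝ := ∑' n : ℕ, 1/((n:ℝ)+1)^3

noncomputable def cb (n : ℕ) : ℝ := (Nat.choose (2*n) n : ℝ) / 4^n

lemma cb_zero : cb 0 = 1 := by simp [cb]

lemma cb_pos (n : ℕ) : 0 < cb n := by
  apply div_pos
  · exact_mod_cast Nat.choose_pos (by omega)
  · positivity

lemma cb_succ (n : ℕ) : cb (n+1) = cb n * (2*n+1) / (2*n+2) := by
  have h := Nat.succ_mul_centralBinom_succ n
  have h' : ((n:ℝ)+1) * (Nat.choose (2*(n+1)) (n+1)) = 2 * (2*n+1) * (Nat.choose (2*n) n) := by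
    simp only [Nat.centralBinom] at h
    exact_mod_cast h
  have hn : ((n:ℝ)+1) ≠ 0 := by positivity
  simp only [cb]
  rw [pow_succ]
  field_simp
  linear_combination 2 * h'

lemma cb_rec (n : ℕ) : 2 * ((n:ℝ)+1) * cb (n+1) = (2*n+1) * cb n := by
  rw [cb_succ]
  have : (2*(n:ℝ)+2) ≠ 0 := by positivity
  field_simp

lemma cb_le_one (n : ℕ) : cb n ≤ 1 := by
  induction n with
  | zero => simp [cb_zero]
  | succ k ih =>
    rw [cb_succ]
    have h1 : (0:ℝ) < 2*k+2 := by positivity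
    rw [div_le_one h1]
    nlinarith [cb_pos k]

lemma cb_sq (n : ℕ) : (cb n)^2 * (2*n+1) ≤ 1 := by
  induction n with
  | zero => simp [cb_zero]
  | succ k ih =>
    rw [cb_succ]
    have h1 : (0:ℝ) < 2*k+2 := by positivity
    rw [div_pow, div_mul_eq_mul_div, div_le_one (by positivity)]
    push_cast
    nlinarith [cb_pos k, sq_nonneg (cb k)]

-- summability of c n * x^n for |x| < 1
lemma summable_cb_pow {x : ℝ} (hx : |x| < 1) : Summable (fun n => cb n * x^n) := by
  apply Summable.of_norm_bounded (summable_geometric_of_lt_one (abs_nonneg x) hx)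
  intro n
  rw [norm_mul, norm_pow]
  calc ‖cb n‖ * ‖x‖^n ≤ 1 * ‖x‖^n := by
        apply mul_le_mul_of_nonneg_right _ (by positivity)
        rw [Real.norm_eq_abs, abs_of_pos (cb_pos n)]; exact cb_le_one n
    _ = |x|^n := by rw [one_mul, Real.norm_eq_abs]

noncomputable def g (x : ℝ) : ℝ := ∑' n, cb n * x^n

noncomputable def Dg (x : ℝ) : ℝ := ∑' n, cb n * ((n:ℝ) * x^(n-1))

lemma summable_u {r : ℝ} (hr0 : 0 ≤ r) (hr : r < 1) :
    Summable (fun n : ℕ => (n:ℝ) * r^(n-1)) := by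
  rw [← summable_nat_add_iff 1]
  have h := summable_pow_mul_geometric_of_norm_lt_one 1 (show ‖r‖ < 1 by rwa [Real.norm_eq_abs, abs_of_nonneg hr0])
  simp only [pow_one] at h
  have h2 : Summable (fun n : ℕ => ((n:ℝ)+1) * r^n) := by
    have := (h.add (summable_geometric_of_lt_one hr0 hr))
    convert this using 2 with n
    · rfl
    ring
  convert h2 using 2 with n
  · rfl
  push_cast
  simp

lemma bound_deriv_term {r y : ℝ} (hy : |y| ≤ r) (n : ℕ) :
    ‖cb n * ((n:ℝ) * y^(n-1))‖ ≤ (n:ℝ) * r^(n-1) := by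
  have hr0 : 0 ≤ r := le_trans (abs_nonneg y) hy
  rw [norm_mul, norm_mul, norm_pow]
  calc ‖cb n‖ * (‖(n:ℝ)‖ * ‖y‖^(n-1)) ≤ 1 * ((n:ℝ) * r^(n-1)) := by
        apply mul_le_mul
        · rw [Real.norm_eq_abs, abs_of_pos (cb_pos n)]; exact cb_le_one n
        · apply mul_le_mul
          · simp
          · exact pow_le_pow_left₀ (norm_nonneg y) (by rwa [Real.norm_eq_abs]) _
          · positivity
          · positivity
        · positivity
        · norm_num
    _ = (n:ℝ) * r^(n-1) := one_mul _

lemma hasDerivAt_g {x : ℝ} (hx : |x| < 1) : HasDerivAt g (Dg x) x := by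
  set r := (|x| + 1)/2 with hr
  have hxr : |x| < r := by rw [hr]; linarith
  have hr1 : r < 1 := by rw [hr]; linarith [abs_nonneg x]
  have hr0 : (0:ℝ) ≤ r := le_trans (abs_nonneg x) hxr.le
  have h0 : (0:ℝ) ∈ Set.Ioo (-r) r := by
    constructor <;> [linarith [abs_nonneg x]; linarith [abs_nonneg x]]
  exact hasDerivAt_tsum_of_isPreconnected (summable_u hr0 hr1)
    (isOpen_Ioo (a := -r) (b := r)) (isPreconnected_Ioo)
    (fun n y _ => (hasDerivAt_pow n y).const_mul (cb n))
    (fun n y hy => bound_deriv_term (le_of_lt (abs_lt.mpr (Set.mem_Ioo.mp hy))) n)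
    h0
    (summable_cb_pow (by norm_num : |(0:ℝ)| < 1))
    (Set.mem_Ioo.mpr (abs_lt.mp hxr))

lemma hasSum_Dg {x : ℝ} (hx : |x| < 1) :
    HasSum (fun n => cb n * ((n:ℝ) * x^(n-1))) (Dg x) := by
  set r := (|x| + 1)/2 with hr
  have hxr : |x| ≤ r := by rw [hr]; linarith
  have hr1 : r < 1 := by rw [hr]; linarith [abs_nonneg x]
  have hr0 : (0:ℝ) ≤ r := le_trans (abs_nonneg x) hxr
  exact (Summable.of_norm_bounded (summable_u hr0 hr1)
    (fun n => bound_deriv_term hxr n)).hasSum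

lemma ode_g {x : ℝ} (hx : |x| < 1) : g x = 2*(1-x) * Dg x := by
  have h1 := hasSum_Dg hx
  have hshift : HasSum (fun n => cb (n+1) * (((n:ℝ)+1) * x^n)) (Dg x) := by
    have := (hasSum_nat_add_iff (f := fun n => cb n * ((n:ℝ) * x^(n-1))) 1).mpr
      (by simpa using h1)
    convert this using 2 with n
    · rfl
    push_cast
    simp
  have hfun2 : (fun n : ℕ => (2*(n:ℝ)+1) * cb n * x^n)
      = (fun n : ℕ => 2 * (cb (n+1) * (((n:ℝ)+1) * x^n))) := by
    funext n
    linear_combination (-(x^n)) * (cb_rec n)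
  have h2 : HasSum (fun n : ℕ => (2*(n:ℝ)+1) * cb n * x^n) (2 * Dg x) := by
    rw [hfun2]; exact hshift.mul_left 2
  have hfun3 : (fun n : ℕ => (n:ℝ) * cb n * x^n)
      = (fun n : ℕ => cb n * ((n:ℝ) * x^(n-1)) * x) := by
    funext n
    cases n with
    | zero => simp
    | succ k =>
      simp only [Nat.add_sub_cancel]
      push_cast
      rw [pow_succ]; ring
  have h3 : HasSum (fun n : ℕ => (n:ℝ) * cb n * x^n) (Dg x * x) := by
    rw [hfun3]; exact h1.mul_right x
  have hg : HasSum (fun n : ℕ => cb n * x^n) (g x) := (summable_cb_pow hx).hasSum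
  have hfun4 : (fun n : ℕ => cb n * x^n)
      = (fun n : ℕ => (2*(n:ℝ)+1) * cb n * x^n - 2 * ((n:ℝ) * cb n * x^n)) := by
    funext n; ring
  have h4 : HasSum (fun n : ℕ => cb n * x^n) (2 * Dg x - 2 * (Dg x * x)) := by
    rw [hfun4]; exact h2.sub (h3.mul_left 2)
  have := hg.unique h4
  rw [this]; ring

lemma hasDerivAt_sqrt_one_sub {x : ℝ} (hx : x < 1) :
    HasDerivAt (fun y : ℝ => Real.sqrt (1-y)) (-(1/(2*Real.sqrt (1-x)))) x := by
  have h1 : HasDerivAt (fun y : ℝ => 1-y) (-1) x := (hasDerivAt_id x).const_sub 1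
  have h2 := (Real.hasDerivAt_sqrt (by linarith : (1:ℝ)-x ≠ 0)).comp x h1
  refine h2.congr_deriv ?_
  ring

lemma g_mul_sqrt {x : ℝ} (hx0 : 0 ≤ x) (hx : x < 1) : g x * Real.sqrt (1-x) = 1 := by
  have key : ∀ y ∈ Set.Icc (0:ℝ) x, g y * Real.sqrt (1-y) = g 0 * Real.sqrt (1-0) := by
    apply constant_of_has_deriv_right_zero
    · intro y hy
      have hy1 : |y| < 1 := abs_lt.mpr ⟨by linarith [hy.1], by linarith [hy.2]⟩
      exact (((hasDerivAt_g hy1).mul (hasDerivAt_sqrt_one_sub (by linarith [hy.2]))).continuousAt).continuousWithinAt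
    · intro y hy
      have hy1 : |y| < 1 := abs_lt.mpr ⟨by linarith [hy.1], by linarith [hy.2]⟩
      have hylt : y < 1 := by linarith [hy.2]
      have hD := (hasDerivAt_g hy1).mul (hasDerivAt_sqrt_one_sub hylt)
      have hs : (0:ℝ) < Real.sqrt (1-y) := Real.sqrt_pos.mpr (by linarith)
      have hs2 : Real.sqrt (1-y)^2 = 1-y := Real.sq_sqrt (by linarith)
      have hval : Dg y * Real.sqrt (1-y) + g y * -(1/(2*Real.sqrt (1-y))) = 0 := by
        rw [ode_g hy1, ← hs2]
        field_simp
        rw [Real.sqrt_sq hs.le]; ring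
      rw [← hval]
      exact hD.hasDerivWithinAt
  have h0 : g 0 = 1 := by
    have : g 0 = cb 0 * (0:ℝ)^0 := tsum_eq_single 0 (fun b hb => by simp [zero_pow hb])
    simpa [cb_zero] using this
  have := key x ⟨hx0, le_refl x⟩
  simpa [h0] using this

lemma g_eq {x : ℝ} (hx0 : 0 ≤ x) (hx : x < 1) : g x = 1 / Real.sqrt (1-x) := by
  have hs : (0:ℝ) < Real.sqrt (1-x) := Real.sqrt_pos.mpr (by linarith)
  field_simp
  exact g_mul_sqrt hx0 hx

noncomputable def fl (x : ℝ) : ℝ := ∑' n, cb (n+1) * x^(n+1) / ((n:ℝ)+1)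

noncomputable def phi (x : ℝ) : ℝ := ∑' n, cb (n+1) * x^n

lemma summable_phi {x : ℝ} (hx : |x| < 1) : Summable (fun n : ℕ => cb (n+1) * x^n) := by
  apply Summable.of_norm_bounded (summable_geometric_of_lt_one (abs_nonneg x) hx)
  intro n
  rw [norm_mul, norm_pow, Real.norm_eq_abs, Real.norm_eq_abs, abs_of_pos (cb_pos (n+1))]
  calc cb (n+1) * |x|^n ≤ 1 * |x|^n :=
        mul_le_mul_of_nonneg_right (cb_le_one (n+1)) (by positivity)
    _ = |x|^n := one_mul _

lemma hasDerivAt_fl {x : ℝ} (hx : |x| < 1) : HasDerivAt fl (phi x) x := by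
  set r := (|x| + 1)/2 with hr
  have hxr : |x| < r := by rw [hr]; linarith
  have hr1 : r < 1 := by rw [hr]; linarith [abs_nonneg x]
  have hr0 : (0:ℝ) ≤ r := le_trans (abs_nonneg x) hxr.le
  have h0 : (0:ℝ) ∈ Set.Ioo (-r) r := by
    constructor <;> [linarith [abs_nonneg x]; linarith [abs_nonneg x]]
  have hderiv : ∀ (n : ℕ) (y : ℝ), y ∈ Set.Ioo (-r) r →
      HasDerivAt (fun z => cb (n+1) * z^(n+1) / ((n:ℝ)+1)) (cb (n+1) * y^n) y := by
    intro n y _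
    have h := ((hasDerivAt_pow (n+1) y).const_mul (cb (n+1))).div_const ((n:ℝ)+1)
    have hn : ((n:ℝ)+1) ≠ 0 := by positivity
    refine h.congr_deriv ?_
    simp only [Nat.add_sub_cancel]
    push_cast
    field_simp
  have hbound : ∀ (n : ℕ) (y : ℝ), y ∈ Set.Ioo (-r) r → ‖cb (n+1) * y^n‖ ≤ r^n := by
    intro n y hy
    have hyr : |y| ≤ r := le_of_lt (abs_lt.mpr (Set.mem_Ioo.mp hy))
    rw [norm_mul, norm_pow, Real.norm_eq_abs, Real.norm_eq_abs, abs_of_pos (cb_pos (n+1))]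
    calc cb (n+1) * |y|^n ≤ 1 * r^n := by
          apply mul_le_mul (cb_le_one (n+1)) (pow_le_pow_left₀ (abs_nonneg y) hyr n)
            (by positivity) (by norm_num)
      _ = r^n := one_mul _
  have hsum0 : Summable (fun n : ℕ => cb (n+1) * (0:ℝ)^(n+1) / ((n:ℝ)+1)) := by
    have : (fun n : ℕ => cb (n+1) * (0:ℝ)^(n+1) / ((n:ℝ)+1)) = (fun _ => (0:ℝ)) := by
      funext n; simp
    rw [this]; exact summable_zero
  exact hasDerivAt_tsum_of_isPreconnected
    (summable_geometric_of_lt_one hr0 hr1)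
    (isOpen_Ioo (a := -r) (b := r)) isPreconnected_Ioo
    hderiv hbound h0 hsum0 (Set.mem_Ioo.mpr (abs_lt.mp hxr))

lemma phi_mul {x : ℝ} (hx : |x| < 1) : x * phi x = g x - 1 := by
  have hphi : HasSum (fun n : ℕ => cb (n+1) * x^n) (phi x) := (summable_phi hx).hasSum
  have h1 : HasSum (fun n : ℕ => cb (n+1) * x^(n+1)) (phi x * x) := by
    have := hphi.mul_right x
    have e : (fun n : ℕ => cb (n+1) * x^(n+1)) = (fun n : ℕ => cb (n+1) * x^n * x) := by
      funext n; rw [pow_succ]; ring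
    rw [e]; exact this
  have h2 : HasSum (fun n : ℕ => cb n * x^n) (phi x * x + ∑ i ∈ range 1, cb i * x^i) :=
    (hasSum_nat_add_iff (f := fun n : ℕ => cb n * x^n) 1).mp h1
  have hg : HasSum (fun n : ℕ => cb n * x^n) (g x) := (summable_cb_pow hx).hasSum
  have := hg.unique h2
  simp only [range_one, sum_singleton, cb_zero, pow_zero, mul_one] at this
  rw [this]; ring

lemma phi_val {x : ℝ} (hx0 : 0 ≤ x) (hx : x < 1) :
    phi x = 1 / (Real.sqrt (1-x) * (1 + Real.sqrt (1-x))) := by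
  have hs : (0:ℝ) < Real.sqrt (1-x) := Real.sqrt_pos.mpr (by linarith)
  have hs2 : Real.sqrt (1-x)^2 = 1-x := Real.sq_sqrt (by linarith)
  rcases eq_or_lt_of_le hx0 with h0 | h0
  · subst h0
    have hphi0 : phi 0 = cb 1 := by
      have : phi 0 = cb (0+1) * (0:ℝ)^0 := tsum_eq_single 0 (fun b hb => by simp [zero_pow hb])
      simpa using this
    rw [hphi0]
    simp only [sub_zero, Real.sqrt_one]
    norm_num [cb]
  · have hxabs : |x| < 1 := abs_lt.mpr ⟨by linarith, hx⟩
    have h := phi_mul hxabs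
    rw [g_eq hx0 hx] at h
    apply mul_left_cancel₀ (ne_of_gt h0)
    rw [h]
    have hxs : x = 1 - Real.sqrt (1-x)^2 := by rw [hs2]; ring
    rw [hxs]
    have h1s : (1:ℝ) + Real.sqrt (1-x) ≠ 0 := by positivity
    field_simp
    rw [sub_sub_cancel, Real.sqrt_sq hs.le, div_sub_one hs.ne', div_mul_eq_mul_div]; ring

lemma hasDerivAt_l {x : ℝ} (hx : x < 1) :
    HasDerivAt (fun y : ℝ => -2 * Real.log (1 + Real.sqrt (1-y)))
      (-(1 / (Real.sqrt (1-x) * (1 + Real.sqrt (1-x)))) * (-1)) x := by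
  have hs : (0:ℝ) < Real.sqrt (1-x) := Real.sqrt_pos.mpr (by linarith)
  have h1 := hasDerivAt_sqrt_one_sub hx
  have h2 : HasDerivAt (fun y : ℝ => 1 + Real.sqrt (1-y)) (-(1/(2*Real.sqrt (1-x)))) x :=
    h1.const_add 1
  have h1s : (0:ℝ) < 1 + Real.sqrt (1-x) := by linarith
  have h3 := (Real.hasDerivAt_log (ne_of_gt h1s)).comp x h2
  have h4 := h3.const_mul (-2 : ℝ)
  refine h4.congr_deriv ?_
  field_simp

lemma fl_eq {x : ℝ} (hx0 : 0 ≤ x) (hx : x < 1) :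
    fl x = 2 * Real.log 2 - 2 * Real.log (1 + Real.sqrt (1-x)) := by
  have key : ∀ y ∈ Set.Icc (0:ℝ) x,
      fl y - (-2 * Real.log (1 + Real.sqrt (1-y)))
        = fl 0 - (-2 * Real.log (1 + Real.sqrt (1-0))) := by
    apply constant_of_has_deriv_right_zero
    · intro y hy
      have hy1 : |y| < 1 := abs_lt.mpr ⟨by linarith [hy.1], by linarith [hy.2]⟩
      have hylt : y < 1 := by linarith [hy.2]
      exact ((hasDerivAt_fl hy1).sub (hasDerivAt_l hylt)).continuousAt.continuousWithinAt
    · intro y hy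
      have hy1 : |y| < 1 := abs_lt.mpr ⟨by linarith [hy.1], by linarith [hy.2]⟩
      have hylt : y < 1 := by linarith [hy.2]
      have hD := (hasDerivAt_fl hy1).sub (hasDerivAt_l hylt)
      have hval : phi y - (-(1 / (Real.sqrt (1-y) * (1 + Real.sqrt (1-y)))) * (-1)) = 0 := by
        rw [phi_val hy.1 hylt]; ring
      rw [← hval]
      exact hD.hasDerivWithinAt
  have hf0 : fl 0 = 0 := by
    have : (fun n : ℕ => cb (n+1) * (0:ℝ)^(n+1) / ((n:ℝ)+1)) = (fun _ => (0:ℝ)) := by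
      funext n; simp
    simp only [fl, this, tsum_zero]
  have := key x ⟨hx0, le_refl x⟩
  rw [hf0] at this
  norm_num at this
  linarith [this]

noncomputable def aa (n : ℕ) : ℝ := cb (n+1) / ((n:ℝ)+1)

lemma cb_sqrt_bound (n : ℕ) : cb (n+1) * Real.sqrt ((n:ℝ)+1) ≤ 1 := by
  have h := cb_sq (n+1)
  have hs : (0:ℝ) ≤ Real.sqrt ((n:ℝ)+1) := Real.sqrt_nonneg _
  have hs2 : Real.sqrt ((n:ℝ)+1)^2 = (n:ℝ)+1 := Real.sq_sqrt (by positivity)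
  have hcb := (cb_pos (n+1)).le
  have h2 : cb (n+1)^2 * ((n:ℝ)+1) ≤ 1 := by
    push_cast at h
    nlinarith [sq_nonneg (cb (n+1))]
  nlinarith [mul_nonneg hcb hs, sq_nonneg (cb (n+1) * Real.sqrt ((n:ℝ)+1) - 1)]

lemma summable_aa : Summable aa := by
  have hsum : Summable (fun n : ℕ => 1 / (((n:ℕ)+1 : ℝ))^((3:ℝ)/2)) := by
    have h := (Real.summable_one_div_nat_rpow (p := (3:ℝ)/2)).mpr (by norm_num)
    have := (summable_nat_add_iff (f := fun n : ℕ => 1 / ((n:ℝ))^((3:ℝ)/2)) 1).mpr h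
    convert this using 2 with n
    · rfl
    push_cast
    ring_nf
  apply Summable.of_nonneg_of_le
    (fun n => by rw [aa]; exact div_nonneg (cb_pos (n+1)).le (by positivity)) _ hsum
  intro n
  have hpos : (0:ℝ) < (n:ℝ)+1 := by positivity
  have hrw : (((n:ℕ)+1 : ℝ))^((3:ℝ)/2) = ((n:ℝ)+1) * Real.sqrt ((n:ℝ)+1) := by
    push_cast
    rw [show ((3:ℝ)/2) = 1 + 1/2 by norm_num, Real.rpow_add hpos, Real.rpow_one,
      Real.sqrt_eq_rpow]
  rw [hrw]
  rw [aa, div_le_div_iff₀ hpos (by positivity)]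
  have := cb_sqrt_bound n
  have hs : (0:ℝ) ≤ Real.sqrt ((n:ℝ)+1) := Real.sqrt_nonneg _
  calc cb (n+1) * (((n:ℝ)+1) * Real.sqrt ((n:ℝ)+1))
      = (cb (n+1) * Real.sqrt ((n:ℝ)+1)) * ((n:ℝ)+1) := by ring
    _ ≤ 1 * ((n:ℝ)+1) := mul_le_mul_of_nonneg_right this hpos.le
    _ = 1 * ((n:ℝ)+1) := rfl

lemma tsum_aa_pow {x : ℝ} (hx0 : 0 < x) (hx : x < 1) :
    ∑' n, aa n * x^n = (2 * Real.log 2 - 2 * Real.log (1 + Real.sqrt (1-x))) / x := by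
  have hxabs : |x| < 1 := abs_lt.mpr ⟨by linarith, hx⟩
  have hsum : Summable (fun n : ℕ => aa n * x^n) := by
    apply Summable.of_norm_bounded (summable_geometric_of_lt_one (abs_nonneg x) hxabs)
    intro n
    rw [norm_mul, norm_pow, Real.norm_eq_abs, Real.norm_eq_abs]
    have h1 : |aa n| ≤ 1 := by
      have haa : (0:ℝ) < aa n := by
        rw [aa]; exact div_pos (cb_pos (n+1)) (by positivity)
      rw [abs_of_pos haa]
      rw [aa, div_le_one (by positivity)]
      calc cb (n+1) ≤ 1 := cb_le_one (n+1)
        _ ≤ (n:ℝ)+1 := by push_cast; linarith [Nat.cast_nonneg (α := ℝ) n]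
    calc |aa n| * |x|^n ≤ 1 * |x|^n := mul_le_mul_of_nonneg_right h1 (by positivity)
      _ = |x|^n := one_mul _
  have h1 : HasSum (fun n : ℕ => aa n * x^n) (∑' n, aa n * x^n) := hsum.hasSum
  have h2 : HasSum (fun n : ℕ => cb (n+1) * x^(n+1) / ((n:ℝ)+1)) ((∑' n, aa n * x^n) * x) := by
    have := h1.mul_right x
    have e : (fun n : ℕ => cb (n+1) * x^(n+1) / ((n:ℝ)+1)) = (fun n : ℕ => aa n * x^n * x) := by
      funext n
      rw [aa, pow_succ]
      field_simp
    rw [e]; exact this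
  have hfl2 : fl x = (∑' n, aa n * x^n) * x := by
    rw [fl]; exact h2.tsum_eq
  rw [eq_div_iff (ne_of_gt hx0), ← fl_eq hx0.le hx, hfl2]

lemma tsum_aa : ∑' n, aa n = 2 * Real.log 2 := by
  have ha := summable_aa
  have hA : Filter.Tendsto (fun x : ℝ => ∑' n, aa n * x^n) (nhdsWithin 1 (Set.Iio 1))
      (nhds (∑' n, aa n)) :=
    Real.tendsto_tsum_powerSeries_nhdsWithin_lt ha.hasSum.tendsto_sum_nat
  -- closed-form limit
  set G : ℝ → ℝ := fun x => (2 * Real.log 2 - 2 * Real.log (1 + Real.sqrt (1-x))) / x with hG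
  have hcont : ContinuousAt G 1 := by
    apply ContinuousAt.div
    · apply ContinuousAt.sub continuousAt_const
      apply ContinuousAt.mul continuousAt_const
      have c1 : ContinuousAt (fun x : ℝ => 1 + Real.sqrt (1-x)) 1 :=
        (continuous_const.add (Real.continuous_sqrt.comp
          (continuous_const.sub continuous_id))).continuousAt
      exact c1.log (by norm_num)
    · exact continuousAt_id
    · norm_num
  have hG1 : G 1 = 2 * Real.log 2 := by
    simp only [hG]
    norm_num
  have hGlim : Filter.Tendsto G (nhdsWithin 1 (Set.Iio 1)) (nhds (2 * Real.log 2)) := by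
    rw [← hG1]
    exact hcont.continuousWithinAt.tendsto
  have hev : ∀ᶠ x in nhdsWithin 1 (Set.Iio 1), (∑' n, aa n * x^n) = G x := by
    filter_upwards [Ioo_mem_nhdsLT_of_mem (show (1:ℝ) ∈ Set.Ioc 0 1 by norm_num)] with x hx
    exact tsum_aa_pow hx.1 hx.2
  have hA2 : Filter.Tendsto (fun x : ℝ => ∑' n, aa n * x^n) (nhdsWithin 1 (Set.Iio 1))
      (nhds (2 * Real.log 2)) := Filter.Tendsto.congr' (hev.mono (fun x h => h.symm)) hGlim
  exact tendsto_nhds_unique hA hA2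

theorem stmt0 :
    ∑' n : ℕ, (1 / (((n:ℝ)+1) * 4^(n+1))) * (Nat.choose (2*(n+1)) (n+1) : ℝ) = Real.log 4 := by
  have h1 : ∀ n : ℕ, (1 / (((n:ℝ)+1) * 4^(n+1))) * (Nat.choose (2*(n+1)) (n+1) : ℝ) = aa n := by
    intro n
    rw [aa, cb, div_div, one_div, inv_mul_eq_div, mul_comm ((4:ℝ)^(n+1)) ((n:ℝ)+1)]
  rw [tsum_congr h1, tsum_aa]
  rw [show (4:ℝ) = 2^2 by norm_num, Real.log_pow]
  push_cast
  ring
end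

section
/- For every positive integer p, the sum over n from 1 to p of (−1)^{n+1}·C(p+1, n+1)·H_n/(n+1) equals (H_{p+1}² − H_{p+1}^{(2)})/2. -/
open Finset Real

lemma Icc_to_range (p : ℕ) (f : ℕ → ℝ) :
    ∑ n ∈ Finset.Icc 1 p, f n = ∑ i ∈ Finset.range p, f (i+1) := by
  induction p with
  | zero => simp
  | succ p ih => rw [Finset.sum_Icc_succ_top (by omega), ih, Finset.sum_range_succ]


lemma H_succ (n : ℕ) : H (n+1) = H n + 1/((n:ℝ)+1) := Finset.sum_range_succ _ n

lemma cast_choose_shift (q i : ℕ) :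
    ((q:ℝ)+1) * (q.choose i) = (((q+1).choose (i+1) : ℕ) : ℝ) * ((i:ℝ)+1) := by
  exact_mod_cast congrArg (Nat.cast (R := ℝ)) (Nat.add_one_mul_choose_eq q i)

lemma term_shift (q i : ℕ) :
    ((q.choose i):ℝ)/((i:ℝ)+1) = (((q+1).choose (i+1) : ℕ) : ℝ)/((q:ℝ)+1) := by
  have h := cast_choose_shift q i
  have hq : ((q:ℝ)+1) ≠ 0 := by positivity
  have hi : ((i:ℝ)+1) ≠ 0 := by positivity
  field_simp
  linarith

lemma alt1 (q : ℕ) (hq : 1 ≤ q) :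
    ∑ i ∈ Finset.range q, (-1:ℝ)^i * (q.choose (i+1)) = 1 := by
  have h0 : ∑ i ∈ Finset.range (q+1), (-1:ℝ)^i * (q.choose i) = 0 := by
    have := Int.alternating_sum_range_choose (n := q)
    rw [if_neg (by omega)] at this
    exact_mod_cast congrArg (fun z : ℤ => (z : ℝ)) this
  rw [Finset.sum_range_succ' (fun i => (-1:ℝ)^i * (q.choose i)) q] at h0
  simp only [pow_succ] at h0
  have : ∑ i ∈ Finset.range q, (-1:ℝ)^i * (q.choose (i+1)) * (-1) + 1 = 0 := by
    simpa using h0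
  have := Finset.sum_mul (Finset.range q) (fun i => (-1:ℝ)^i * (q.choose (i+1))) (-1)
  linarith [this]

lemma shiftL (q : ℕ) :
    ∑ i ∈ Finset.range (q+1), (-1:ℝ)^i * (q.choose i)/((i:ℝ)+1) = 1/((q:ℝ)+1) := by
  have : ∀ i ∈ Finset.range (q+1), (-1:ℝ)^i * (q.choose i)/((i:ℝ)+1)
      = (-1:ℝ)^i * ((q+1).choose (i+1)) * (1/((q:ℝ)+1)) := by
    intro i _
    rw [mul_div_assoc, term_shift q i]; ring
  rw [Finset.sum_congr rfl this, ← Finset.sum_mul, alt1 (q+1) (by omega), one_mul]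

lemma LA (q : ℕ) :
    ∑ i ∈ Finset.range q, (-1:ℝ)^i * (q.choose (i+1))/((i:ℝ)+1) = H q := by
  induction q with
  | zero => simp [H]
  | succ q ih =>
    have hsplit : ∀ i ∈ Finset.range (q+1),
        (-1:ℝ)^i * ((q+1).choose (i+1))/((i:ℝ)+1)
        = (-1:ℝ)^i * (q.choose i)/((i:ℝ)+1) + (-1:ℝ)^i * (q.choose (i+1))/((i:ℝ)+1) := by
      intro i _
      rw [Nat.choose_succ_succ q i]
      push_cast; ring
    rw [Finset.sum_congr rfl hsplit, Finset.sum_add_distrib, shiftL,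
      Finset.sum_range_succ, Nat.choose_succ_self, ih]
    rw [H_succ]
    push_cast; ring

lemma LB (q : ℕ) :
    ∑ i ∈ Finset.range (q+1), (-1:ℝ)^i * ((q+1).choose (i+1)) * H (i+1)
      = 1/((q:ℝ)+1) := by
  have hsplit : ∀ i ∈ Finset.range (q+1),
      (-1:ℝ)^i * ((q+1).choose (i+1)) * H (i+1)
      = ((-1:ℝ)^i * (q.choose i) * H i + (-1:ℝ)^i * (q.choose i)/((i:ℝ)+1))
        + (-1:ℝ)^i * (q.choose (i+1)) * H (i+1) := by
    intro i _
    rw [Nat.choose_succ_succ q i, H_succ]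
    push_cast; ring
  rw [Finset.sum_congr rfl hsplit, Finset.sum_add_distrib, Finset.sum_add_distrib, shiftL]
  have h1 : ∑ i ∈ Finset.range (q+1), (-1:ℝ)^i * (q.choose i) * H i
      = - ∑ i ∈ Finset.range (q+1), (-1:ℝ)^i * (q.choose (i+1)) * H (i+1) := by
    rw [Finset.sum_range_succ' (fun i => (-1:ℝ)^i * (q.choose i) * H i) q]
    rw [Finset.sum_range_succ (fun i => (-1:ℝ)^i * (q.choose (i+1)) * H (i+1)) q]
    have h0 : H 0 = 0 := by simp [H]
    simp only [Nat.choose_succ_self, Nat.cast_zero, h0, mul_zero, zero_mul, add_zero,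
      neg_add, neg_zero, pow_zero, one_mul]
    rw [← Finset.sum_neg_distrib]
    exact Finset.sum_congr rfl (fun i _ => by ring)
  rw [h1]; ring


lemma H2_succ (n : ℕ) : H2 (n+1) = H2 n + 1/((n:ℝ)+1)^2 := Finset.sum_range_succ _ n

lemma sumU (p : ℕ) :
    ∑ i ∈ Finset.range p, (-1:ℝ)^i * ((p+1).choose (i+2)) * H (i+1) = H p := by
  have hB := LB p
  have hA := LA (p+1)
  rw [Finset.sum_range_succ' (fun i => (-1:ℝ)^i * ((p+1).choose (i+1)) * H (i+1)) p] at hB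
  rw [Finset.sum_range_succ' (fun i => (-1:ℝ)^i * ((p+1).choose (i+1))/((i:ℝ)+1)) p] at hA
  have e1 : ∑ k ∈ Finset.range p, (-1:ℝ)^(k+1) * ((p+1).choose (k+1+1)) * H (k+1+1)
      = - ∑ k ∈ Finset.range p, (-1:ℝ)^k * ((p+1).choose (k+2)) * H (k+2) := by
    rw [← Finset.sum_neg_distrib]
    exact Finset.sum_congr rfl fun i _ => by ring
  have e2 : ∑ k ∈ Finset.range p, (-1:ℝ)^(k+1) * ((p+1).choose (k+1+1))/(((k:ℕ):ℝ)+1+1)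
      = - ∑ k ∈ Finset.range p, (-1:ℝ)^k * ((p+1).choose (k+2))/((k:ℝ)+2) := by
    rw [← Finset.sum_neg_distrib]
    exact Finset.sum_congr rfl fun i _ => by push_cast; ring
  simp only [Nat.cast_add, Nat.cast_one] at hB hA
  rw [e1] at hB
  rw [e2] at hA
  have hH1 : H 1 = 1 := by simp [H]
  simp only [pow_zero, one_mul, Nat.choose_one_right, Nat.cast_zero, hH1, mul_one,
    zero_add, div_one] at hB hA
  have hHp : H p = H (p+1) - 1/((p:ℝ)+1) := by rw [H_succ]; ring
  have hterm : ∀ i ∈ Finset.range p, (-1:ℝ)^i * ((p+1).choose (i+2)) * H (i+1)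
      = (-1:ℝ)^i * ((p+1).choose (i+2)) * H (i+2)
        - (-1:ℝ)^i * ((p+1).choose (i+2))/((i:ℝ)+2) := by
    intro i _
    have : H (i+2) = H (i+1) + 1/((i:ℝ)+2) := by rw [H_succ (i+1)]; push_cast; ring
    rw [this]; ring
  rw [Finset.sum_congr rfl hterm, Finset.sum_sub_distrib, hHp]
  push_cast at hB hA ⊢
  linarith

lemma sumT (p : ℕ) :
    ∑ i ∈ Finset.range p, (-1:ℝ)^i * (p.choose (i+1)) * H (i+1) / ((i:ℝ)+2)
      = H p / ((p:ℝ)+1) := by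
  have hterm : ∀ i ∈ Finset.range p, (-1:ℝ)^i * (p.choose (i+1)) * H (i+1) / ((i:ℝ)+2)
      = ((-1:ℝ)^i * ((p+1).choose (i+2)) * H (i+1)) * (1/((p:ℝ)+1)) := by
    intro i _
    have h2 : ((p:ℝ)+1) * (p.choose (i+1)) = (((p+1).choose (i+2) : ℕ) : ℝ) * ((i:ℝ)+2) := by
      exact_mod_cast congrArg (Nat.cast (R := ℝ)) (Nat.add_one_mul_choose_eq p (i+1))
    have hi : ((i:ℝ)+2) ≠ 0 := by positivity
    have hp : ((p:ℝ)+1) ≠ 0 := by positivity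
    field_simp
    linear_combination (H (i+1)) * h2
  rw [Finset.sum_congr rfl hterm, ← Finset.sum_mul, sumU]
  ring

lemma sumS (p : ℕ) :
    ∑ i ∈ Finset.range p, (-1:ℝ)^i * ((p+1).choose (i+2)) * H (i+1) / ((i:ℝ)+2)
      = ((H (p+1))^2 - H2 (p+1)) / 2 := by
  induction p with
  | zero => simp [H, H2]
  | succ p ih =>
    have hsplit : ∀ i ∈ Finset.range (p+1),
        (-1:ℝ)^i * ((p+2).choose (i+2)) * H (i+1) / ((i:ℝ)+2)
        = (-1:ℝ)^i * ((p+1).choose (i+1)) * H (i+1) / ((i:ℝ)+2)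
          + (-1:ℝ)^i * ((p+1).choose (i+2)) * H (i+1) / ((i:ℝ)+2) := by
      intro i _
      rw [show p+2 = (p+1)+1 by ring, Nat.choose_succ_succ (p+1) (i+1)]
      push_cast; ring
    rw [Finset.sum_congr rfl hsplit, Finset.sum_add_distrib]
    have hT := sumT (p+1)
    push_cast at hT
    rw [hT, Finset.sum_range_succ, Nat.choose_succ_self, ih]
    rw [H_succ (p+1), H2_succ (p+1)]
    have h2 : ((p:ℝ)+2) ≠ 0 := by positivity
    push_cast
    field_simp
    ring


theorem stmt3 (p : ℕ) (hp : 1 ≤ p) :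
    ∑ n ∈ Finset.Icc 1 p, (-1:ℝ)^(n+1) * (Nat.choose (p+1) (n+1) : ℝ) * H n / ((n:ℝ)+1)
      = ((H (p+1))^2 - H2 (p+1)) / 2 := by
  rw [Icc_to_range p (fun n => (-1:ℝ)^(n+1) * (Nat.choose (p+1) (n+1) : ℝ) * H n / ((n:ℝ)+1))]
  rw [← sumS p]
  apply Finset.sum_congr rfl
  intro i _
  push_cast
  ring
end

section
/- For every nonnegative integer n, the sum over k from 0 to n of C(n,k)·(−1)^k·C(2k,k)/4^k equals C(2n,n)/4^n. -/
open Finset Real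

lemma aux_cos_pow_even (n : ℕ) :
    (∫ x in (0:ℝ)..π, Real.cos x ^ (2 * n)) = π * ∏ i ∈ range n, (2 * (i : ℝ) + 1) / (2 * i + 2) := by
  induction' n with k ih; · simp
  rw [prod_range_succ_comm, mul_left_comm, ← ih, Nat.mul_succ, integral_cos_pow]
  norm_cast
  field_simp
  simp

lemma aux_central_prod (k : ℕ) :
    (Nat.choose (2*k) k : ℝ) / 4^k = ∏ i ∈ range k, (2 * (i : ℝ) + 1) / (2 * i + 2) := by
  induction' k with k ih
  · simp
  · have h := Nat.succ_mul_centralBinom_succ k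
    rw [Nat.centralBinom, Nat.centralBinom] at h
    have h' : ((k+1 : ℕ) : ℝ) * (Nat.choose (2*(k+1)) (k+1) : ℝ)
        = 2 * (2*(k:ℝ)+1) * (Nat.choose (2*k) k : ℝ) := by
      exact_mod_cast congrArg (Nat.cast : ℕ → ℝ) h
    rw [prod_range_succ, ← ih]
    have hk : ((k:ℝ)+1) ≠ 0 := by positivity
    have h4 : (4:ℝ)^k ≠ 0 := by positivity
    push_cast at h' ⊢
    field_simp
    linear_combination (2*(4:ℝ)^k) * h'

theorem stmt6 (n : ℕ) :
    ∑ k ∈ Finset.range (n+1), (Nat.choose n k : ℝ) * (-1)^k * (Nat.choose (2*k) k : ℝ) / 4^k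
      = (Nat.choose (2*n) n : ℝ) / 4^n := by
  have hπ : (π:ℝ) ≠ 0 := Real.pi_ne_zero
  have key : (∑ k ∈ Finset.range (n+1),
      (Nat.choose n k : ℝ) * (-1)^k * (Nat.choose (2*k) k : ℝ) / 4^k) * π
      = (Nat.choose (2*n) n : ℝ) / 4^n * π := by
    calc (∑ k ∈ Finset.range (n+1),
        (Nat.choose n k : ℝ) * (-1)^k * (Nat.choose (2*k) k : ℝ) / 4^k) * π
        = ∑ k ∈ Finset.range (n+1),
          (Nat.choose n k : ℝ) * (-1)^k * ∫ x in (0:ℝ)..π, Real.cos x ^ (2*k) := by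
          rw [Finset.sum_mul]
          refine Finset.sum_congr rfl fun k _ => ?_
          rw [aux_cos_pow_even, ← aux_central_prod]
          ring
      _ = ∫ x in (0:ℝ)..π, ∑ k ∈ Finset.range (n+1),
            (Nat.choose n k : ℝ) * (-1)^k * Real.cos x ^ (2*k) := by
          rw [intervalIntegral.integral_finset_sum]
          · refine Finset.sum_congr rfl fun k _ => ?_
            rw [intervalIntegral.integral_const_mul]
          · intro k _
            apply Continuous.intervalIntegrable
            fun_prop
      _ = ∫ x in (0:ℝ)..π, Real.sin x ^ (2*n) := by
          refine intervalIntegral.integral_congr fun x _ => ?_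
          have : Real.sin x ^ (2*n) = ((-(Real.cos x ^ 2)) + 1)^n := by
            rw [pow_mul, Real.sin_sq]
            ring_nf
          rw [this, add_pow]
          refine Finset.sum_congr rfl fun k _ => ?_
          rw [neg_pow, pow_mul]
          ring
      _ = (Nat.choose (2*n) n : ℝ) / 4^n * π := by
          rw [integral_sin_pow_even, ← aux_central_prod]; ring
  exact mul_right_cancel₀ hπ key
end

section
/- For every positive integer n, the sum over k from 1 to n of C(n,k)·(−1)^k·(1 − 2^k)/k equals the n-th skew-harmonic number H_n^− = 1 − 1/2 + 1/3 − ... + (−1)^{n−1}/n. -/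
open Finset Real

lemma binom_sum (m : ℕ) (x : ℝ) :
    ∑ k ∈ Finset.range (m+1), (Nat.choose m k : ℝ) * x^k = (1+x)^m := by
  rw [add_comm (1:ℝ) x, add_pow]
  simp [mul_comm]

lemma binom_shift (m : ℕ) (x : ℝ) :
    ∑ i ∈ Finset.range (m+1), (Nat.choose (m+1) (i+1) : ℝ) * x^(i+1) = (1+x)^(m+1) - 1 := by
  have h := binom_sum (m+1) x
  rw [Finset.sum_range_succ'] at h
  simp at h
  linarith

lemma key (m : ℕ) :
    ∑ i ∈ Finset.range (m+1), (Nat.choose (m+1) (i+1) : ℝ) * ((-1)^(i+1) * (1-2^(i+1)))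
      = -(-1:ℝ)^(m+1) := by
  have h1 := binom_shift m (-1)
  have h2 := binom_shift m (-2)
  have : ∀ i : ℕ, (Nat.choose (m+1) (i+1) : ℝ) * ((-1)^(i+1) * (1-2^(i+1)))
      = (Nat.choose (m+1) (i+1) : ℝ) * (-1)^(i+1) - (Nat.choose (m+1) (i+1) : ℝ) * (-2)^(i+1) := by
    intro i
    have : ((-2:ℝ))^(i+1) = (-1)^(i+1) * 2^(i+1) := by
      rw [← neg_one_mul, mul_pow]
    rw [this]; ring
  rw [Finset.sum_congr rfl (fun i _ => this i), Finset.sum_sub_distrib, h1, h2]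
  norm_num
  ring

lemma main (n : ℕ) :
    ∑ i ∈ Finset.range n, (Nat.choose n (i+1) : ℝ) * ((-1)^(i+1) * (1-2^(i+1))) / ((i:ℝ)+1)
      = ∑ i ∈ Finset.range n, (-1:ℝ)^i / ((i:ℝ)+1) := by
  induction n with
  | zero => simp
  | succ n ih =>
    have pascal : ∀ i : ℕ, (Nat.choose (n+1) (i+1) : ℝ)
        = (Nat.choose n (i+1) : ℝ) + (Nat.choose n i : ℝ) := by
      intro i
      rw [Nat.choose_succ_succ']
      push_cast; ring
    have split : ∑ i ∈ Finset.range (n+1),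
        (Nat.choose (n+1) (i+1) : ℝ) * ((-1)^(i+1) * (1-2^(i+1))) / ((i:ℝ)+1)
      = (∑ i ∈ Finset.range (n+1), (Nat.choose n (i+1) : ℝ) * ((-1)^(i+1) * (1-2^(i+1))) / ((i:ℝ)+1))
      + (∑ i ∈ Finset.range (n+1), (Nat.choose n i : ℝ) * ((-1)^(i+1) * (1-2^(i+1))) / ((i:ℝ)+1)) := by
      rw [← Finset.sum_add_distrib]
      refine Finset.sum_congr rfl fun i _ => ?_
      rw [pascal i]; ring
    have first : ∑ i ∈ Finset.range (n+1),
        (Nat.choose n (i+1) : ℝ) * ((-1)^(i+1) * (1-2^(i+1))) / ((i:ℝ)+1)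
      = ∑ i ∈ Finset.range n, (-1:ℝ)^i / ((i:ℝ)+1) := by
      rw [Finset.sum_range_succ, Nat.choose_eq_zero_of_lt (by omega)]
      simpa using ih
    have second : ∑ i ∈ Finset.range (n+1),
        (Nat.choose n i : ℝ) * ((-1)^(i+1) * (1-2^(i+1))) / ((i:ℝ)+1)
      = (-1:ℝ)^n / ((n:ℝ)+1) := by
      have hterm : ∀ i : ℕ, (Nat.choose n i : ℝ) * ((-1)^(i+1) * (1-2^(i+1))) / ((i:ℝ)+1)
          = (Nat.choose (n+1) (i+1) : ℝ) * ((-1)^(i+1) * (1-2^(i+1))) / ((n:ℝ)+1) := by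
        intro i
        have h : ((n:ℝ)+1) * (Nat.choose n i : ℝ) = (Nat.choose (n+1) (i+1) : ℝ) * ((i:ℝ)+1) := by
          have := Nat.add_one_mul_choose_eq n i
          have : ((Nat.succ n * Nat.choose n i : ℕ) : ℝ) = ((Nat.choose (n+1) (i+1) * (i+1) : ℕ) : ℝ) := by
            exact_mod_cast congrArg (Nat.cast : ℕ → ℝ) this
          push_cast at this
          linarith
        have hi : ((i:ℝ)+1) ≠ 0 := by positivity
        have hn : ((n:ℝ)+1) ≠ 0 := by positivity
        rw [div_eq_div_iff hi hn]
        linear_combination ((-1:ℝ)^(i+1) * (1 - 2^(i+1))) * h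
      rw [Finset.sum_congr rfl (fun i _ => hterm i)]
      rw [← Finset.sum_div]
      have : ∑ i ∈ Finset.range (n+1), (Nat.choose (n+1) (i+1) : ℝ) * ((-1)^(i+1) * (1-2^(i+1)))
          = -(-1:ℝ)^(n+1) := key n
      rw [this]
      rw [pow_succ]; ring
    rw [split, first, second, Finset.sum_range_succ]

theorem stmt8 (n : ℕ) (hn : 1 ≤ n) :
    ∑ k ∈ Finset.Icc 1 n, (Nat.choose n k : ℝ) * (-1)^k * (1 - 2^k) / (k:ℝ)
      = ∑ j ∈ Finset.Icc 1 n, (-1:ℝ)^(j-1) / (j:ℝ) := by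
  have hL : ∑ k ∈ Finset.Icc 1 n, (Nat.choose n k : ℝ) * (-1)^k * (1 - 2^k) / (k:ℝ)
      = ∑ i ∈ Finset.range n, (Nat.choose n (i+1) : ℝ) * ((-1)^(i+1) * (1-2^(i+1))) / ((i:ℝ)+1) := by
    rw [← Finset.Ico_add_one_right_eq_Icc, Finset.sum_Ico_eq_sum_range]
    simp only [Nat.add_sub_cancel]
    refine Finset.sum_congr rfl fun i _ => ?_
    rw [add_comm 1 i]
    push_cast
    ring
  have hR : ∑ j ∈ Finset.Icc 1 n, (-1:ℝ)^(j-1) / (j:ℝ)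
      = ∑ i ∈ Finset.range n, (-1:ℝ)^i / ((i:ℝ)+1) := by
    rw [← Finset.Ico_add_one_right_eq_Icc, Finset.sum_Ico_eq_sum_range]
    simp only [Nat.add_sub_cancel]
    refine Finset.sum_congr rfl fun i _ => ?_
    rw [add_comm 1 i]
    simp [Nat.add_sub_cancel]
  rw [hL, hR, main]
end

section
/- For every integer r ≥ 1 and every integer n ≥ 0, the sum over k from 0 to n of C(n,k)·(−1)^k/((k+1)²(k+2)···(k+r)) equals h_{n+1}^{(r)}/((n+1)(n+2)···(n+r)), where h_{n+1}^{(r)} = C(n+r, r−1)·(H_{n+r} − H_{r−1}) is the hyperharmonic number. -/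
open Finset Real

lemma prodPos (x : ℝ) (hx : 0 < x) (m : ℕ) : 0 < ∏ i ∈ range m, (x + i) :=
  Finset.prod_pos (fun i _ => by positivity)

lemma topProd (m : ℕ) (x : ℝ) :
    ∏ i ∈ range (m+2), (x + i) = (∏ i ∈ range (m+1), (x + i)) * (x + (m+1)) := by
  rw [Finset.prod_range_succ]; push_cast; ring

lemma botProd (m : ℕ) (x : ℝ) :
    ∏ i ∈ range (m+2), (x + i) = x * ∏ i ∈ range (m+1), (x + 1 + i) := by
  rw [Finset.prod_range_succ' (fun i => x + (i:ℝ)) (m+1)]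
  push_cast
  rw [add_zero, mul_comm]
  congr 1
  apply Finset.prod_congr rfl
  intro i _; ring

lemma pfrac (s : ℕ) (y : ℝ) (hy : 0 < y) :
    (1:ℝ) / ∏ i ∈ range (s+2), (y + i)
      = (1/((s:ℝ)+1)) * (1 / ∏ i ∈ range (s+1), (y + i) - 1 / ∏ i ∈ range (s+1), (y + 1 + i)) := by
  have hA := prodPos y hy (s+1)
  have hB := prodPos (y+1) (by linarith) (s+1)
  have hB' : 0 < ∏ i ∈ range (s+1), (y + 1 + i) := by
    refine lt_of_lt_of_eq hB (Finset.prod_congr rfl fun i _ => by ring)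
  have hC := topProd s y
  have hC' := botProd s y
  have hBe : ∏ i ∈ range (s+1), (y + 1 + i)
      = (∏ i ∈ range (s+1), (y + i)) * (y + (s+1)) / y := by
    field_simp
    rw [← hC, hC']
  rw [hC, hBe]
  have hys : (0:ℝ) < y + (s+1) := by positivity
  field_simp
  ring

lemma lemC (n : ℕ) : ∀ x : ℝ, 0 < x →
    ∑ k ∈ range (n+1), (n.choose k : ℝ) * (-1)^k / (x + k)
      = n.factorial / ∏ i ∈ range (n+1), (x + i) := by
  induction n with
  | zero => intro x hx; simp
  | succ n ih =>
    intro x hx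
    have hx1 : (0:ℝ) < x + 1 := by linarith
    have h1 : ∑ k ∈ range (n+2), ((n+1).choose k : ℝ) * (-1)^k / (x + k)
        = (∑ k ∈ range (n+1), (-((n.choose k : ℝ) * (-1)^k / ((x+1) + k))
            + -((n.choose (k+1) : ℝ) * (-1)^k / (x + (k+1))))) + 1/x := by
      rw [Finset.sum_range_succ' (fun k => ((n+1).choose k : ℝ) * (-1)^k / (x + k)) (n+1)]
      congr 1
      · apply Finset.sum_congr rfl
        intro k _
        rw [Nat.choose_succ_succ]
        push_cast
        ring
      · simp
    have h3 : (∑ k ∈ range (n+1), -((n.choose (k+1) : ℝ) * (-1)^k / (x + (k+1)))) + 1/x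
        = ∑ k ∈ range (n+1), (n.choose k : ℝ) * (-1)^k / (x + k) := by
      rw [Finset.sum_range_succ]
      rw [Finset.sum_range_succ' (fun k => (n.choose k : ℝ) * (-1)^k / (x + k)) n]
      simp only [Nat.choose_succ_self, Nat.cast_zero, zero_mul, zero_div, neg_zero, add_zero,
        Nat.choose_zero_right, Nat.cast_one, pow_zero, one_mul, Nat.cast_zero]
      congr 1
      · apply Finset.sum_congr rfl
        intro k _
        push_cast
        ring
    have hnn : ∑ k ∈ range (n+1), -((n.choose k : ℝ) * (-1)^k / ((x+1) + k))
        = - ∑ k ∈ range (n+1), (n.choose k : ℝ) * (-1)^k / ((x+1) + k) := by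
      rw [Finset.sum_neg_distrib]
    have key : ∑ k ∈ range (n+2), ((n+1).choose k : ℝ) * (-1)^k / (x + k)
        = (∑ k ∈ range (n+1), (n.choose k : ℝ) * (-1)^k / (x + k))
          - ∑ k ∈ range (n+1), (n.choose k : ℝ) * (-1)^k / ((x+1) + k) := by
      rw [h1, Finset.sum_add_distrib, hnn]
      linarith [h3]
    rw [key, ih x hx, ih (x+1) hx1]
    set A := ∏ i ∈ range (n+1), (x + i) with hA
    set B := ∏ i ∈ range (n+1), (x + 1 + i) with hB
    have eC : ∏ i ∈ range (n+2), (x + i) = A * (x + (n+1)) := by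
      rw [Finset.prod_range_succ]; push_cast; ring
    have eC' : ∏ i ∈ range (n+2), (x + i) = x * B := by
      rw [Finset.prod_range_succ' (fun i => x + (i:ℝ)) (n+1)]
      push_cast
      rw [add_zero, mul_comm]
      congr 1
      apply Finset.prod_congr rfl
      intro i _; ring
    have hApos : 0 < A := prodPos x hx (n+1)
    have hBpos : 0 < B := prodPos (x+1) hx1 (n+1)
    have hBe : B = A * (x + (n+1)) / x := by
      field_simp
      rw [mul_comm, ← eC', eC]
    rw [hBe, eC, Nat.factorial_succ]
    push_cast
    field_simp
    ring

lemma lemG (s : ℕ) : ∀ (n : ℕ) (x : ℝ), 0 < x →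
    ∑ k ∈ range (n+1), (n.choose k : ℝ) * (-1)^k / ∏ i ∈ range (s+1), (x + k + i)
      = (n+s).factorial / (s.factorial * ∏ i ∈ range (n+s+1), (x + i)) := by
  induction s with
  | zero =>
    intro n x hx
    simp only [Nat.add_zero, Nat.factorial_zero, Nat.cast_one, one_mul]
    rw [← lemC n x hx]
    apply Finset.sum_congr rfl
    intro k _
    simp
  | succ s ih =>
    intro n x hx
    have hx1 : (0:ℝ) < x + 1 := by linarith
    have hsplit : ∀ k ∈ range (n+1),
        (n.choose k : ℝ) * (-1)^k / ∏ i ∈ range (s+2), (x + k + i)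
        = (1/((s:ℝ)+1)) * ((n.choose k : ℝ) * (-1)^k / ∏ i ∈ range (s+1), (x + k + i))
          - (1/((s:ℝ)+1)) * ((n.choose k : ℝ) * (-1)^k / ∏ i ∈ range (s+1), ((x+1) + k + i)) := by
      intro k _
      have hy : (0:ℝ) < x + k := by positivity
      have hp := pfrac s (x + k) hy
      have e2 : ∏ i ∈ range (s+1), (x + k + 1 + i) = ∏ i ∈ range (s+1), ((x+1) + k + i) :=
        Finset.prod_congr rfl fun i _ => by ring
      rw [e2] at hp
      have : (n.choose k : ℝ) * (-1)^k / ∏ i ∈ range (s+2), (x + k + i)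
          = (n.choose k : ℝ) * (-1)^k * (1 / ∏ i ∈ range (s+2), (x + k + i)) := by ring
      rw [this, hp]
      ring
    rw [Finset.sum_congr rfl hsplit, Finset.sum_sub_distrib, ← Finset.mul_sum, ← Finset.mul_sum]
    rw [ih n x hx, ih n (x+1) hx1]
    have hnse : n + (s+1) + 1 = n + s + 2 := by omega
    have hne : n + (s+1) = n + s + 1 := by omega
    rw [hnse, hne]
    have hApos := prodPos x hx (n+s+1)
    have hCpos := prodPos x hx (n+s+2)
    have hBpos : 0 < ∏ i ∈ range (n+s+1), (x + 1 + i) := by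
      refine lt_of_lt_of_eq (prodPos (x+1) hx1 (n+s+1)) (Finset.prod_congr rfl fun i _ => by ring)
    have hfac : (0:ℝ) < s.factorial := by positivity
    have hBe : ∏ i ∈ range (n+s+1), (x + 1 + i)
        = (∏ i ∈ range (n+s+1), (x + i)) * (x + ((n:ℝ)+s+1)) / x := by
      field_simp
      rw [← botProd (n+s) x, topProd (n+s) x]
      push_cast; ring
    rw [hBe, topProd (n+s) x, Nat.factorial_succ (n+s), Nat.factorial_succ s]
    have hxs : (0:ℝ) < x + ((n:ℝ)+s+1) := by positivity
    push_cast
    field_simp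
    ring

lemma Hsucc (m : ℕ) : H (m+1) = H m + 1/((m:ℝ)+1) := by
  rw [H, H, Finset.sum_range_succ]

lemma altsum (m : ℕ) : ∑ j ∈ range (m+1), (-1:ℝ)^j * (((m+1).choose (j+1)):ℝ) = 1 := by
  have h : ((∑ i ∈ range (m+2), (-1:ℤ)^i * ((m+1).choose i) : ℤ) : ℝ) = 0 := by
    rw [Int.alternating_sum_range_choose]
    simp
  push_cast at h
  rw [Finset.sum_range_succ' (fun i => (-1:ℝ)^i * (((m+1).choose i):ℝ)) (m+1)] at h
  simp only [pow_zero, one_mul, Nat.choose_zero_right, Nat.cast_one] at h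
  have : ∑ j ∈ range (m+1), (-1:ℝ)^(j+1) * (((m+1).choose (j+1)):ℝ)
      = - ∑ j ∈ range (m+1), (-1:ℝ)^j * (((m+1).choose (j+1)):ℝ) := by
    rw [← Finset.sum_neg_distrib]
    apply Finset.sum_congr rfl
    intro j _; ring
  rw [this] at h
  linarith

lemma binom_harm (m : ℕ) :
    ∑ j ∈ range m, (-1:ℝ)^j * ((m.choose (j+1)):ℝ) / ((j:ℝ)+1) = H m := by
  induction m with
  | zero => simp [H]
  | succ m ih =>
    have hsplit : ∀ j ∈ range (m+1),
        (-1:ℝ)^j * (((m+1).choose (j+1)):ℝ) / ((j:ℝ)+1)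
        = (-1:ℝ)^j * ((m.choose j):ℝ) / ((j:ℝ)+1)
          + (-1:ℝ)^j * ((m.choose (j+1)):ℝ) / ((j:ℝ)+1) := by
      intro j _
      rw [Nat.choose_succ_succ]
      push_cast
      ring
    rw [Finset.sum_congr rfl hsplit, Finset.sum_add_distrib]
    have h2 : ∑ j ∈ range (m+1), (-1:ℝ)^j * ((m.choose (j+1)):ℝ) / ((j:ℝ)+1) = H m := by
      rw [Finset.sum_range_succ, Nat.choose_succ_self]
      simpa using ih
    have h1 : ∑ j ∈ range (m+1), (-1:ℝ)^j * ((m.choose j):ℝ) / ((j:ℝ)+1)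
        = 1/((m:ℝ)+1) := by
      have e : ∀ j ∈ range (m+1),
          (-1:ℝ)^j * ((m.choose j):ℝ) / ((j:ℝ)+1)
          = (1/((m:ℝ)+1)) * ((-1:ℝ)^j * (((m+1).choose (j+1)):ℝ)) := by
        intro j _
        have hc : ((m:ℝ)+1) * ((m.choose j):ℝ) = (((m+1).choose (j+1)):ℝ) * ((j:ℝ)+1) := by
          exact_mod_cast congrArg (Nat.cast (R := ℝ)) (Nat.add_one_mul_choose_eq m j)
        have hj : ((j:ℝ)+1) ≠ 0 := by positivity
        have hm : ((m:ℝ)+1) ≠ 0 := by positivity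
        field_simp
        linear_combination hc
      rw [Finset.sum_congr rfl e, ← Finset.mul_sum, altsum m]
      ring
    rw [h1, h2, Hsucc]
    ring

lemma lemS1 (n : ℕ) :
    ∑ k ∈ range (n+1), (n.choose k : ℝ) * (-1)^k / (((k:ℝ)+1) * ((k:ℝ)+1))
      = H (n+1) / ((n:ℝ)+1) := by
  have e : ∀ k ∈ range (n+1),
      (n.choose k : ℝ) * (-1)^k / (((k:ℝ)+1) * ((k:ℝ)+1))
      = (1/((n:ℝ)+1)) * ((-1:ℝ)^k * (((n+1).choose (k+1)):ℝ) / ((k:ℝ)+1)) := by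
    intro k _
    have hc : ((n:ℝ)+1) * ((n.choose k):ℝ) = (((n+1).choose (k+1)):ℝ) * ((k:ℝ)+1) := by
      exact_mod_cast congrArg (Nat.cast (R := ℝ)) (Nat.add_one_mul_choose_eq n k)
    have hk : ((k:ℝ)+1) ≠ 0 := by positivity
    have hn : ((n:ℝ)+1) ≠ 0 := by positivity
    field_simp
    linear_combination hc
  rw [Finset.sum_congr rfl e, ← Finset.mul_sum, binom_harm (n+1)]
  ring

lemma prodFact (m : ℕ) : ∏ i ∈ range m, ((1:ℝ) + i) = m.factorial := by
  induction m with
  | zero => simp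
  | succ m ih =>
    rw [Finset.prod_range_succ, ih, Nat.factorial_succ]
    push_cast
    ring

lemma prodShift (a : ℕ) : ∀ m : ℕ, ∏ i ∈ range m, ((a:ℝ) + 1 + i)
    = (a+m).factorial / a.factorial := by
  intro m
  induction m with
  | zero =>
    have : ((a.factorial:ℝ)) ≠ 0 := by positivity
    simp [div_self this]
  | succ m ih =>
    rw [Finset.prod_range_succ, ih]
    have : a + (m+1) = (a+m) + 1 := by omega
    rw [this, Nat.factorial_succ]
    have : (0:ℝ) < a.factorial := by positivity
    push_cast
    field_simp
    ring

lemma pfrac2 (s : ℕ) (y : ℝ) (hy : 0 < y) :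
    (1:ℝ) / (y * ∏ i ∈ range (s+2), (y + i))
      = (1/((s:ℝ)+1)) * (1 / (y * ∏ i ∈ range (s+1), (y + i)) - 1 / ∏ i ∈ range (s+2), (y + i)) := by
  have hA := prodPos y hy (s+1)
  rw [topProd s y]
  have hys : (0:ℝ) < y + ((s:ℝ)+1) := by positivity
  field_simp
  ring

lemma mainS (s : ℕ) : ∀ n : ℕ,
    ∑ k ∈ range (n+1), (n.choose k : ℝ) * (-1)^k /
        (((k:ℝ)+1) * ∏ i ∈ range (s+1), ((k:ℝ) + 1 + i))
      = (H (n+s+1) - H s) / (s.factorial * ((n:ℝ)+1)) := by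
  induction s with
  | zero =>
    intro n
    have h0 : H 0 = 0 := by simp [H]
    rw [h0]
    simp only [Nat.factorial_zero, Nat.cast_one, one_mul, sub_zero, Nat.add_zero]
    rw [← lemS1 n]
    apply Finset.sum_congr rfl
    intro k _
    norm_num
  | succ s ih =>
    intro n
    have hsplit : ∀ k ∈ range (n+1),
        (n.choose k : ℝ) * (-1)^k / (((k:ℝ)+1) * ∏ i ∈ range (s+2), ((k:ℝ) + 1 + i))
        = (1/((s:ℝ)+1)) * ((n.choose k : ℝ) * (-1)^k / (((k:ℝ)+1) * ∏ i ∈ range (s+1), ((k:ℝ) + 1 + i)))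
          - (1/((s:ℝ)+1)) * ((n.choose k : ℝ) * (-1)^k / ∏ i ∈ range (s+2), ((1:ℝ) + k + i)) := by
      intro k _
      have hy : (0:ℝ) < (k:ℝ)+1 := by positivity
      have hp := pfrac2 s ((k:ℝ)+1) hy
      have e1 : ∏ i ∈ range (s+2), ((k:ℝ) + 1 + i) = ∏ i ∈ range (s+2), (((k:ℝ)+1) + i) :=
        Finset.prod_congr rfl fun i _ => by ring
      have e2 : ∏ i ∈ range (s+1), ((k:ℝ) + 1 + i) = ∏ i ∈ range (s+1), (((k:ℝ)+1) + i) :=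
        Finset.prod_congr rfl fun i _ => by ring
      have e3 : ∏ i ∈ range (s+2), ((1:ℝ) + k + i) = ∏ i ∈ range (s+2), (((k:ℝ)+1) + i) :=
        Finset.prod_congr rfl fun i _ => by ring
      rw [e1, e2, e3]
      have h4 : (n.choose k : ℝ) * (-1)^k / ((((k:ℝ)+1)) * ∏ i ∈ range (s+2), (((k:ℝ)+1) + i))
          = (n.choose k : ℝ) * (-1)^k * (1 / ((((k:ℝ)+1)) * ∏ i ∈ range (s+2), (((k:ℝ)+1) + i))) := by
        ring
      rw [h4, hp]
      ring
    rw [Finset.sum_congr rfl hsplit, Finset.sum_sub_distrib, ← Finset.mul_sum, ← Finset.mul_sum]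
    rw [ih n]
    have hG : ∑ k ∈ range (n+1), (n.choose k : ℝ) * (-1)^k / ∏ i ∈ range (s+2), ((1:ℝ) + k + i)
        = (n+(s+1)).factorial / ((s+1).factorial * ∏ i ∈ range (n+(s+1)+1), ((1:ℝ) + i)) :=
      lemG (s+1) n 1 one_pos
    rw [hG, prodFact (n+(s+1)+1)]
    have hns : n + (s+1) + 1 = n + s + 2 := by omega
    have hns2 : n + (s+1) = n + s + 1 := by omega
    rw [hns, hns2]
    have e5 : n + (s+1) + 1 = (n + s + 1) + 1 := by omega
    rw [show n + (s+1) + 1 = n + s + 2 from by omega] at *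
    -- harmonic recursions
    rw [show n + s + 1 + 1 = n + s + 2 from by omega] at *
    rw [Hsucc (n+s+1), Hsucc s]
    rw [Nat.factorial_succ (n+s+1), Nat.factorial_succ s]
    have hfs : (0:ℝ) < s.factorial := by positivity
    have hfns : (0:ℝ) < (n+s+1).factorial := by positivity
    push_cast
    have h1 : ((n:ℝ)+s+1+1) ≠ 0 := by positivity
    have h2 : ((s:ℝ)+1) ≠ 0 := by positivity
    have h3 : ((n:ℝ)+1) ≠ 0 := by positivity
    field_simp
    ring

lemma iccProd (r k : ℕ) : ∏ i ∈ Finset.Icc 1 r, ((k:ℝ) + i) = ∏ i ∈ range r, ((k:ℝ)+1+i) := by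
  induction r with
  | zero => simp
  | succ r ih => rw [Finset.prod_Icc_succ_top (by omega), ih, Finset.prod_range_succ]; push_cast; ring

theorem stmt10 (r n : ℕ) (hr : 1 ≤ r) :
    ∑ k ∈ Finset.range (n+1), (Nat.choose n k : ℝ) * (-1)^k /
        (((k:ℝ)+1) * ∏ i ∈ Finset.Icc 1 r, ((k:ℝ) + i))
      = hh r (n+1) / (∏ i ∈ Finset.Icc 1 r, ((n:ℝ) + i)) := by
  obtain ⟨s, rfl⟩ : ∃ s, r = s + 1 := ⟨r-1, by omega⟩
  have hL : ∀ k ∈ range (n+1), (Nat.choose n k : ℝ) * (-1)^k /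
        (((k:ℝ)+1) * ∏ i ∈ Finset.Icc 1 (s+1), ((k:ℝ) + i))
      = (Nat.choose n k : ℝ) * (-1)^k /
        (((k:ℝ)+1) * ∏ i ∈ range (s+1), ((k:ℝ) + 1 + i)) := by
    intro k _
    rw [iccProd]
  rw [Finset.sum_congr rfl hL, mainS s n, iccProd (s+1) n]
  -- now compute RHS
  have hhh : hh (s+1) (n+1) = (Nat.choose (n+s+1) s : ℝ) * (H (n+s+1) - H s) := by
    have e1 : n+1+(s+1)-1 = n+s+1 := by omega
    have e2 : (s+1)-1 = s := by omega
    rw [hh, e1, e2]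
  rw [hhh, prodShift n (s+1)]
  have hchoose : ((Nat.choose (n+s+1) s : ℝ)) * (s.factorial : ℝ) * ((n+1).factorial : ℝ)
      = ((n+s+1).factorial : ℝ) := by
    have h := Nat.choose_mul_factorial_mul_factorial (show s ≤ n+s+1 by omega)
    rw [show n+s+1-s = n+1 from by omega] at h
    exact_mod_cast h
  have h5 : n + (s+1) = n + s + 1 := by omega
  rw [h5]
  have hfn : (0:ℝ) < (n:ℕ).factorial := by positivity
  have hfns : (0:ℝ) < ((n+s+1).factorial : ℝ) := by positivity
  have hfs : (0:ℝ) < (s.factorial : ℝ) := by positivity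
  have hfn1 : ((n+1).factorial : ℝ) = ((n:ℝ)+1) * (n.factorial : ℝ) := by
    rw [Nat.factorial_succ]; push_cast; ring
  have h3 : ((n:ℝ)+1) ≠ 0 := by positivity
  have hcpos : (0:ℝ) < (Nat.choose (n+s+1) s : ℝ) := by
    exact_mod_cast Nat.choose_pos (show s ≤ n+s+1 by omega)
  have hq : ((n+s+1).factorial : ℝ) / (n.factorial : ℝ)
      = (Nat.choose (n+s+1) s : ℝ) * (s.factorial:ℝ) * ((n:ℝ)+1) := by
    rw [← hchoose, hfn1]
    field_simp
  rw [hq]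
  field_simp
end

section
/- For every integer r ≥ 1 and every integer n ≥ 0, the sum over k from 0 to n of C(n,k)·(−1)^k·H_k/((k+1)(k+2)···(k+r)) equals −h_n^{(r)}/((n+1)(n+2)···(n+r)). -/
set_option maxHeartbeats 1000000

open Finset Real

noncomputable def P (r k : ℕ) : ℝ := ∏ i ∈ Finset.Icc 1 r, ((k:ℝ) + i)

lemma P_pos (r k : ℕ) : 0 < P r k := by
  apply Finset.prod_pos; intro i hi
  have h1 : 1 ≤ i := (Finset.mem_Icc.mp hi).1
  have : (1:ℝ) ≤ (i:ℝ) := by exact_mod_cast h1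
  positivity

lemma P_ne (r k : ℕ) : P r k ≠ 0 := (P_pos r k).ne'

lemma P_zero (k : ℕ) : P 0 k = 1 := by simp [P]

lemma P_succ (r k : ℕ) : P (r+1) k = P r k * ((k:ℝ) + r + 1) := by
  rw [P, Finset.prod_Icc_succ_top (by omega : 1 ≤ r + 1)]
  push_cast [P]; ring

lemma P_one (k : ℕ) : P 1 k = (k:ℝ) + 1 := by
  rw [show (1:ℕ) = 0 + 1 from rfl, P_succ, P_zero]; push_cast; ring

lemma P_shift (r k : ℕ) : ((k:ℝ)+1) * P r (k+1) = P (r+1) k := by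
  induction r with
  | zero => simp [P_zero, P_succ]
  | succ r ih =>
    rw [P_succ r (k+1), P_succ (r+1) k, ← ih]; push_cast; ring

lemma P_choose (r k : ℕ) : P r k = (r.factorial : ℝ) * ((k+r).choose r) := by
  induction r with
  | zero => simp [P_zero]
  | succ r ih =>
    rw [P_succ, ih]
    have h := Nat.add_one_mul_choose_eq (k + r) r
    have h2 : (((k+r+1) * (k+r).choose r : ℕ) : ℝ) = (((k+r+1).choose (r+1) * (r+1) : ℕ) : ℝ) := by
      rw [h]
    have h3 : k + (r+1) = k + r + 1 := by omega
    rw [h3, Nat.factorial_succ]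
    push_cast at h2 ⊢
    linear_combination (r.factorial : ℝ) * h2

lemma H_zero : H 0 = 0 := by simp [H]

lemma H_pred (j : ℕ) : H (j-1) = H j - 1/(j:ℝ) := by
  cases j with
  | zero => simp [H_zero]
  | succ j => rw [Nat.add_sub_cancel, H_succ]; push_cast; ring

lemma pascal_sum (n : ℕ) (t : ℕ → ℝ) :
    ∑ j ∈ range (n+2), ((n+1).choose j : ℝ) * t j
      = ∑ j ∈ range (n+1), (n.choose j : ℝ) * t j
        + ∑ j ∈ range (n+1), (n.choose j : ℝ) * t (j+1) := by
  have e1 : ∑ j ∈ range (n+2), ((n+1).choose j : ℝ) * t j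
      = ∑ j ∈ range (n+1), ((n+1).choose (j+1) : ℝ) * t (j+1) + ((n+1).choose 0 : ℝ) * t 0 :=
    Finset.sum_range_succ' _ (n+1)
  have e2 : ∑ j ∈ range (n+2), (n.choose j : ℝ) * t j
      = ∑ j ∈ range (n+1), (n.choose (j+1) : ℝ) * t (j+1) + (n.choose 0 : ℝ) * t 0 :=
    Finset.sum_range_succ' _ (n+1)
  have e3 : ∑ j ∈ range (n+2), (n.choose j : ℝ) * t j
      = ∑ j ∈ range (n+1), (n.choose j : ℝ) * t j := by
    rw [Finset.sum_range_succ]; simp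
  have e4 : ∀ j ∈ range (n+1), ((n+1).choose (j+1) : ℝ) * t (j+1)
      = (n.choose j : ℝ) * t (j+1) + (n.choose (j+1) : ℝ) * t (j+1) := by
    intro j _; rw [Nat.choose_succ_succ]; push_cast; ring
  rw [e1, Finset.sum_congr rfl e4, Finset.sum_add_distrib]
  rw [e3] at e2
  simp only [Nat.choose_zero_right, Nat.cast_one, one_mul] at e2 ⊢
  linarith [e2]

lemma key_s11 (n : ℕ) (g : ℕ → ℝ) :
    ∑ k ∈ range (n+1), (n.choose k : ℝ) * (-1)^k / ((k:ℝ)+1) * g (k+1)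
      = -(1/((n:ℝ)+1)) * ((∑ j ∈ range (n+2), ((n+1).choose j : ℝ) * (-1)^j * g j) - g 0) := by
  have hn : ((n:ℝ)+1) ≠ 0 := by positivity
  have e1 : ∀ k ∈ range (n+1), (n.choose k : ℝ) * (-1)^k / ((k:ℝ)+1) * g (k+1)
      = -(1/((n:ℝ)+1)) * (((n+1).choose (k+1) : ℝ) * (-1)^(k+1) * g (k+1)) := by
    intro k _
    have h2 : ((n:ℝ)+1) * (n.choose k : ℝ) = ((n+1).choose (k+1) : ℝ) * ((k:ℝ)+1) := by
      exact_mod_cast Nat.add_one_mul_choose_eq n k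
    have hk : ((k:ℝ)+1) ≠ 0 := by positivity
    rw [pow_succ]
    field_simp
    linear_combination g (k+1) * h2
  rw [Finset.sum_congr rfl e1, ← Finset.mul_sum]
  have e2 : ∑ j ∈ range (n+2), ((n+1).choose j : ℝ) * (-1)^j * g j
      = ∑ k ∈ range (n+1), ((n+1).choose (k+1) : ℝ) * (-1)^(k+1) * g (k+1)
        + ((n+1).choose 0 : ℝ) * (-1)^0 * g 0 :=
    Finset.sum_range_succ' _ (n+1)
  rw [e2]; simp

lemma alt (n : ℕ) : ∑ j ∈ range (n+2), ((n+1).choose j : ℝ) * (-1)^j = 0 := by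
  have h := Int.alternating_sum_range_choose (n := n+1)
  simp only [Nat.add_eq_zero, and_false, if_false] at h
  have : ((∑ i ∈ range (n+2), (-1)^i * ((n+1).choose i : ℤ) : ℤ) : ℝ) = 0 := by
    rw [h]; norm_num
  push_cast at this
  rw [← this]
  apply Finset.sum_congr rfl; intro j _; ring

lemma lemF (m : ℕ) : ∀ n : ℕ, ∑ k ∈ range (n+1), (n.choose k : ℝ) * (-1)^k / P (m+1) k
    = 1 / ((m.factorial : ℝ) * ((n:ℝ)+m+1)) := by
  induction m with
  | zero =>
    intro n
    have e : ∀ k ∈ range (n+1), (n.choose k : ℝ) * (-1)^k / P 1 k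
        = (n.choose k : ℝ) * (-1)^k / ((k:ℝ)+1) * (fun _ : ℕ => (1:ℝ)) (k+1) := by
      intro k _; rw [P_one]; simp
    rw [Finset.sum_congr rfl e, key_s11 n (fun _ : ℕ => (1:ℝ))]
    have e2 : ∑ j ∈ range (n+2), ((n+1).choose j : ℝ) * (-1)^j * (fun _ : ℕ => (1:ℝ)) j
        = ∑ j ∈ range (n+2), ((n+1).choose j : ℝ) * (-1)^j := by
      apply Finset.sum_congr rfl; intro j _; simp
    rw [e2, alt]
    simp
  | succ m ih =>
    intro n
    have e : ∀ k ∈ range (n+1), (n.choose k : ℝ) * (-1)^k / P (m+2) k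
        = (n.choose k : ℝ) * (-1)^k / ((k:ℝ)+1) * (fun j : ℕ => 1 / P (m+1) j) (k+1) := by
      intro k _
      rw [← P_shift (m+1) k]
      simp only []
      rw [div_mul_eq_div_div]
      ring
    rw [Finset.sum_congr rfl e, key_s11 n (fun j : ℕ => 1 / P (m+1) j)]
    have e2 : ∑ j ∈ range (n+2), ((n+1).choose j : ℝ) * (-1)^j * (fun j : ℕ => 1 / P (m+1) j) j
        = ∑ j ∈ range (n+2), ((n+1).choose j : ℝ) * (-1)^j / P (m+1) j := by
      apply Finset.sum_congr rfl; intro j _; simp; ring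
    rw [e2, ih (n+1)]
    have h0 : P (m+1) 0 = ((m+1).factorial : ℝ) := by
      rw [P_choose]; norm_num
    rw [h0]
    have hfm : (m.factorial : ℝ) ≠ 0 := by exact_mod_cast m.factorial_ne_zero
    have hfm1 : ((m+1).factorial : ℝ) ≠ 0 := by exact_mod_cast (m+1).factorial_ne_zero
    have hfs : ((m+1).factorial : ℝ) = ((m:ℝ)+1) * m.factorial := by
      rw [Nat.factorial_succ]; push_cast; ring
    have h1 : ((n:ℝ)+1) ≠ 0 := by positivity
    have h2 : ((n:ℝ)+1+m+1) ≠ 0 := by positivity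
    have h3 : ((n:ℝ)+(m+1)+1) ≠ 0 := by positivity
    rw [hfs]
    push_cast
    field_simp
    ring

lemma lemA (r : ℕ) : ∀ n : ℕ, ∑ j ∈ range (n+1), (n.choose j : ℝ) * (-1)^j / ((j:ℝ) * P r j)
    = -(H (n+r) - H r) / (r.factorial : ℝ) := by
  intro n
  induction n with
  | zero => simp
  | succ n ih =>
    have hps := pascal_sum n (fun j => (-1)^j / ((j:ℝ) * P r j))
    have e1 : ∑ j ∈ range (n+2), ((n+1).choose j : ℝ) * (-1)^j / ((j:ℝ) * P r j)
        = ∑ j ∈ range (n+2), ((n+1).choose j : ℝ) * ((-1)^j / ((j:ℝ) * P r j)) := by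
      apply Finset.sum_congr rfl; intro j _; ring
    have e2 : ∑ j ∈ range (n+1), (n.choose j : ℝ) * ((-1)^j / ((j:ℝ) * P r j))
        = ∑ j ∈ range (n+1), (n.choose j : ℝ) * (-1)^j / ((j:ℝ) * P r j) := by
      apply Finset.sum_congr rfl; intro j _; ring
    have e3 : ∑ j ∈ range (n+1), (n.choose j : ℝ) * ((-1)^(j+1) / (((j+1:ℕ):ℝ) * P r (j+1)))
        = -(1 / ((r.factorial : ℝ) * ((n:ℝ)+r+1))) := by
      rw [← lemF r n, ← Finset.sum_neg_distrib]
      apply Finset.sum_congr rfl; intro j _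
      push_cast
      rw [P_shift r j, pow_succ]
      ring
    rw [e1, hps, e2, e3, ih]
    have h1 : n+1+r = (n+r)+1 := by omega
    rw [h1, H_succ]
    have hf : (r.factorial : ℝ) ≠ 0 := by exact_mod_cast r.factorial_ne_zero
    have h2 : ((n:ℝ)+r+1) ≠ 0 := by positivity
    have h3 : (((n+r:ℕ):ℝ)+1) ≠ 0 := by positivity
    push_cast
    field_simp
    ring

lemma lemC_s11 (m : ℕ) : ∑ j ∈ range (m+2), ((m+1).choose j : ℝ) * (-1)^j * H j
    = -(1/((m:ℝ)+1)) := by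
  have hps := pascal_sum m (fun j => (-1)^j * H j)
  have e1 : ∑ j ∈ range (m+2), ((m+1).choose j : ℝ) * (-1)^j * H j
      = ∑ j ∈ range (m+2), ((m+1).choose j : ℝ) * ((-1)^j * H j) := by
    apply Finset.sum_congr rfl; intro j _; ring
  rw [e1, hps, ← Finset.sum_add_distrib]
  have e2 : ∀ j ∈ range (m+1), (m.choose j : ℝ) * ((-1)^j * H j)
      + (m.choose j : ℝ) * ((-1)^(j+1) * H (j+1))
      = -((m.choose j : ℝ) * (-1)^j / P 1 j) := by
    intro j _
    rw [H_succ, P_one, pow_succ]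
    have : ((j:ℝ)+1) ≠ 0 := by positivity
    field_simp
    ring
  rw [Finset.sum_congr rfl e2, Finset.sum_neg_distrib, lemF 0 m]
  norm_num

lemma lemM (s : ℕ) : ∀ n : ℕ, ∑ k ∈ range (n+1), (n.choose k : ℝ) * (-1)^k * H k / P (s+1) k
    = -(((n+s).choose s : ℝ) * (H (n+s) - H s)) / P (s+1) n := by
  induction s with
  | zero =>
    intro n
    have e : ∀ k ∈ range (n+1), (n.choose k : ℝ) * (-1)^k * H k / P (0+1) k
        = (n.choose k : ℝ) * (-1)^k / ((k:ℝ)+1) * (fun j : ℕ => H (j-1)) (k+1) := by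
      intro k _
      simp only [Nat.add_sub_cancel]
      rw [P_one]; ring
    rw [Finset.sum_congr rfl e, key_s11 n (fun j : ℕ => H (j-1))]
    have e2 : ∑ j ∈ range (n+2), ((n+1).choose j : ℝ) * (-1)^j * (fun j : ℕ => H (j-1)) j
        = (∑ j ∈ range (n+2), ((n+1).choose j : ℝ) * (-1)^j * H j)
          - ∑ j ∈ range (n+2), ((n+1).choose j : ℝ) * (-1)^j / ((j:ℝ) * P 0 j) := by
      rw [← Finset.sum_sub_distrib]
      apply Finset.sum_congr rfl; intro j _
      simp only [H_pred, P_zero]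
      rw [mul_one]
      ring
    rw [e2, lemC_s11 n, lemA 0 (n+1)]
    simp only [Nat.add_zero, Nat.zero_sub, Nat.sub_zero, Nat.choose_zero_right, Nat.cast_one,
      H_zero, P_one]
    rw [show P (0+1) n = (n:ℝ)+1 from P_one n, H_succ]
    have h1 : ((n:ℝ)+1) ≠ 0 := by positivity
    field_simp
    ring
  | succ s ih =>
    intro n
    have e : ∀ k ∈ range (n+1), (n.choose k : ℝ) * (-1)^k * H k / P (s+1+1) k
        = (n.choose k : ℝ) * (-1)^k / ((k:ℝ)+1) * (fun j : ℕ => H (j-1) / P (s+1) j) (k+1) := by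
      intro k _
      simp only [Nat.add_sub_cancel]
      rw [← P_shift (s+1) k]
      field_simp
    rw [Finset.sum_congr rfl e, key_s11 n (fun j : ℕ => H (j-1) / P (s+1) j)]
    have e2 : ∑ j ∈ range (n+2), ((n+1).choose j : ℝ) * (-1)^j * (fun j : ℕ => H (j-1) / P (s+1) j) j
        = (∑ j ∈ range (n+2), ((n+1).choose j : ℝ) * (-1)^j * H j / P (s+1) j)
          - ∑ j ∈ range (n+2), ((n+1).choose j : ℝ) * (-1)^j / ((j:ℝ) * P (s+1) j) := by
      rw [← Finset.sum_sub_distrib]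
      apply Finset.sum_congr rfl; intro j _
      simp only [H_pred]
      rw [sub_div, div_div]
      ring
    rw [e2, ih (n+1), lemA (s+1) (n+1)]
    simp only [Nat.zero_sub, H_zero, zero_div, sub_zero]
    have i1 : n+1+s = n+s+1 := by omega
    have i2 : n+1+(s+1) = n+s+2 := by omega
    have i3 : n+(s+1) = n+s+1 := by omega
    rw [i1, i2, i3]
    have hp : P (s+1+1) n = ((n:ℝ)+1) * P (s+1) (n+1) := (P_shift (s+1) n).symm
    have hpc : P (s+1) (n+1) = ((s+1).factorial : ℝ) * ((n+s+2).choose (s+1) : ℝ) := by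
      rw [P_choose, show n+1+(s+1) = n+s+2 from by omega]
    have hc3 : ((n+s+2).choose (s+1) : ℝ) = ((n+s+1).choose s : ℝ) + ((n+s+1).choose (s+1) : ℝ) := by
      exact_mod_cast congrArg (Nat.cast (R := ℝ)) (Nat.choose_succ_succ (n+s+1) s)
    have hc2 : ((n+s+1).choose (s+1) : ℝ) * ((n:ℝ)+(s:ℝ)+2) = ((n+s+2).choose (s+1) : ℝ) * ((n:ℝ)+1) := by
      have h := Nat.choose_mul_succ_eq (n+s+1) (s+1)
      have h2 : n+s+1+1-(s+1) = n+1 := by omega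
      rw [h2] at h
      exact_mod_cast congrArg (Nat.cast (R := ℝ)) h
    have hC1pos : (0:ℝ) < ((n+s+2).choose (s+1) : ℝ) := by
      exact_mod_cast Nat.choose_pos (by omega : s+1 ≤ n+s+2)
    have hF : ((s+1).factorial : ℝ) ≠ 0 := by exact_mod_cast (s+1).factorial_ne_zero
    have hn1 : ((n:ℝ)+1) ≠ 0 := by positivity
    have hs1 : ((s:ℝ)+1) ≠ 0 := by positivity
    have hns2 : ((n:ℝ)+(s:ℝ)+2) ≠ 0 := by positivity
    have hHs1 : H (s+1) = H s + 1/((s:ℝ)+1) := H_succ s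
    have hHn : H (n+s+2) = H (n+s+1) + 1/((n:ℝ)+(s:ℝ)+2) := by
      have := H_succ (n+s+1)
      rw [show n+s+1+1 = n+s+2 from rfl] at this
      rw [this]; push_cast; ring
    have hB : ((n+s+1).choose (s+1) : ℝ) = ((n+s+2).choose (s+1) : ℝ) * ((n:ℝ)+1) / ((n:ℝ)+(s:ℝ)+2) := by
      field_simp
      linarith [hc2]
    have hA : ((n+s+1).choose s : ℝ) = ((n+s+2).choose (s+1) : ℝ) - ((n+s+1).choose (s+1) : ℝ) := by
      linarith [hc3]
    rw [hHn, hHs1, hp, hpc, hA, hB]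
    have hC1ne : ((n+s+2).choose (s+1) : ℝ) ≠ 0 := hC1pos.ne'
    set c := ((n+s+2).choose (s+1) : ℝ) with hcdef
    set f := ((s+1).factorial : ℝ) with hfdef
    set a := H (n+s+1) with hadef
    set b := H s with hbdef
    field_simp
    ring

theorem stmt11 (r n : ℕ) (hr : 1 ≤ r) :
    ∑ k ∈ Finset.range (n+1), (Nat.choose n k : ℝ) * (-1)^k * H k /
        (∏ i ∈ Finset.Icc 1 r, ((k:ℝ) + i))
      = - hh r n / (∏ i ∈ Finset.Icc 1 r, ((n:ℝ) + i)) := by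
  obtain ⟨s, rfl⟩ : ∃ s, r = s+1 := ⟨r-1, by omega⟩
  have hhh : hh (s+1) n = ((n+s).choose s : ℝ) * (H (n+s) - H s) := by
    rw [hh, show n+(s+1)-1 = n+s from by omega, show s+1-1 = s from by omega]
  have hM := lemM s n
  simp only [P] at hM
  rw [hhh]
  rw [← hM]
end

section
/- For every integer r ≥ 2 and every integer n ≥ 0, the sum over k from 0 to n of (−1)^k·C(n,k)·k/(k+r−1)² equals −h_n^{(r)}/C(n+r−1, n)². -/
open Finset Real

lemma pascal (n : ℕ) (g : ℕ → ℝ) :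
    ∑ k ∈ range (n+2), (-1:ℝ)^k * ((n+1).choose k) * g k
      = ∑ k ∈ range (n+1), (-1:ℝ)^k * (n.choose k) * (g k - g (k+1)) := by
  have hA : ∑ k ∈ range (n+2), (-1:ℝ)^k * (n.choose k) * g k
      = ∑ k ∈ range (n+1), (-1:ℝ)^k * (n.choose k) * g k := by
    rw [Finset.sum_range_succ, Nat.choose_succ_self]
    simp
  have split : ∑ k ∈ range (n+1), (-1:ℝ)^k * (n.choose k) * (g k - g (k+1))
      = (∑ k ∈ range (n+1), (-1:ℝ)^k * (n.choose k) * g k)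
        - ∑ k ∈ range (n+1), (-1:ℝ)^k * (n.choose k) * g (k+1) := by
    rw [← Finset.sum_sub_distrib]; exact Finset.sum_congr rfl fun k _ => by ring
  rw [Finset.sum_range_succ' _ (n+1)]
  rw [Finset.sum_range_succ' _ (n+1)] at hA
  simp only [Nat.choose_succ_succ, Nat.cast_add, pow_succ, pow_zero, Nat.choose_zero_right,
    Nat.cast_one, one_mul] at *
  rw [split, ← hA, add_sub_right_comm]
  congr 1
  rw [← Finset.sum_sub_distrib]
  exact Finset.sum_congr rfl fun k _ => by push_cast; ring

lemma L1 : ∀ (n : ℕ) (x : ℝ), 0 < x →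
    ∑ k ∈ range (n+1), (-1:ℝ)^k * (n.choose k) * (1/(x + k))
      = n.factorial / ∏ j ∈ range (n+1), (x + j) := by
  intro n
  induction n with
  | zero => intro x hx; simp
  | succ n ih =>
    intro x hx
    have hx1 : (0:ℝ) < x + 1 := by linarith
    rw [show n+1+1 = n+2 from rfl, pascal]
    have hsum : ∑ k ∈ range (n+1), (-1:ℝ)^k * (n.choose k) * (1/(x+k) - 1/(x+(k+1:ℕ)))
        = (∑ k ∈ range (n+1), (-1:ℝ)^k * (n.choose k) * (1/(x+k)))
          - ∑ k ∈ range (n+1), (-1:ℝ)^k * (n.choose k) * (1/((x+1)+k)) := by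
      rw [← Finset.sum_sub_distrib]
      exact Finset.sum_congr rfl fun k _ => by push_cast; ring_nf
    rw [hsum, ih x hx, ih (x+1) hx1]
    have hP : (0:ℝ) < ∏ j ∈ range (n+1), (x + j) := by
      apply Finset.prod_pos; intro j _; positivity
    have hR : (0:ℝ) < ∏ j ∈ range (n+1), ((x+1) + j) := by
      apply Finset.prod_pos; intro j _; positivity
    have hQ1 : ∏ j ∈ range (n+2), (x + j) = (∏ j ∈ range (n+1), (x + j)) * (x + (n+1)) := by
      rw [Finset.prod_range_succ]; push_cast; ring
    have hQ2 : ∏ j ∈ range (n+2), (x + j) = (∏ j ∈ range (n+1), ((x+1) + j)) * x := by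
      rw [Finset.prod_range_succ' (fun j => x + (j:ℕ))]
      simp only [Nat.cast_zero, add_zero]
      congr 1
      exact Finset.prod_congr rfl fun j _ => by push_cast; ring
    rw [hQ1]
    rw [hQ1] at hQ2
    have hfac : ((n+1).factorial : ℝ) = (n+1) * n.factorial := by
      push_cast [Nat.factorial_succ]; ring
    rw [hfac]
    field_simp
    linear_combination (-1:ℝ) * hQ2

lemma L2 : ∀ (n : ℕ) (x : ℝ), 0 < x →
    ∑ k ∈ range (n+1), (-1:ℝ)^k * (n.choose k) * (1/(x + k)^2)
      = ((n.factorial : ℝ) / ∏ j ∈ range (n+1), (x + j)) * ∑ j ∈ range (n+1), 1/(x + j) := by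
  intro n
  induction n with
  | zero => intro x hx; simp [sq]
  | succ n ih =>
    intro x hx
    have hx1 : (0:ℝ) < x + 1 := by linarith
    rw [show n+1+1 = n+2 from rfl, pascal]
    have hsum : ∑ k ∈ range (n+1), (-1:ℝ)^k * (n.choose k) * (1/(x+k)^2 - 1/(x+(k+1:ℕ))^2)
        = (∑ k ∈ range (n+1), (-1:ℝ)^k * (n.choose k) * (1/(x+k)^2))
          - ∑ k ∈ range (n+1), (-1:ℝ)^k * (n.choose k) * (1/((x+1)+k)^2) := by
      rw [← Finset.sum_sub_distrib]
      exact Finset.sum_congr rfl fun k _ => by push_cast; ring_nf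
    rw [hsum, ih x hx, ih (x+1) hx1]
    have hP : (0:ℝ) < ∏ j ∈ range (n+1), (x + j) := by
      apply Finset.prod_pos; intro j _; positivity
    have hR : (0:ℝ) < ∏ j ∈ range (n+1), ((x+1) + j) := by
      apply Finset.prod_pos; intro j _; positivity
    have hQ1 : ∏ j ∈ range (n+2), (x + j) = (∏ j ∈ range (n+1), (x + j)) * (x + (n+1)) := by
      rw [Finset.prod_range_succ]; push_cast; ring
    have hQ2 : (∏ j ∈ range (n+1), (x + j)) * (x + (n+1)) = (∏ j ∈ range (n+1), ((x+1) + j)) * x := by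
      rw [← hQ1, Finset.prod_range_succ' (fun j => x + (j:ℕ))]
      simp only [Nat.cast_zero, add_zero]
      congr 1
      exact Finset.prod_congr rfl fun j _ => by push_cast; ring
    have hT1 : ∑ j ∈ range (n+2), 1/(x + j) = (∑ j ∈ range (n+1), 1/(x + j)) + 1/(x + (n+1)) := by
      rw [Finset.sum_range_succ]; push_cast; ring
    have hT2 : ∑ j ∈ range (n+2), 1/(x + j) = (∑ j ∈ range (n+1), 1/((x+1) + j)) + 1/x := by
      rw [Finset.sum_range_succ' (fun j => 1/(x + (j:ℕ)))]
      simp only [Nat.cast_zero, add_zero]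
      congr 1
      exact Finset.sum_congr rfl fun j _ => by push_cast; ring
    rw [hQ1, hT1]
    have hfac : ((n+1).factorial : ℝ) = (n+1) * n.factorial := by
      push_cast [Nat.factorial_succ]; ring
    rw [hfac]
    have hS : ∑ j ∈ range (n+1), 1/((x+1) + j) = (∑ j ∈ range (n+1), 1/(x + j)) + 1/(x + (n+1)) - 1/x := by
      have := hT2.symm.trans hT1
      linarith
    rw [hS]
    set P := ∏ j ∈ range (n+1), (x + j) with hPdef
    set R := ∏ j ∈ range (n+1), ((x+1) + j) with hRdef
    set T := ∑ j ∈ range (n+1), 1/(x + j) with hTdef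
    have hxn : (0:ℝ) < x + (n+1) := by positivity
    have hR' : R = P * (x + ((n:ℝ)+1)) / x := (eq_div_iff hx.ne').mpr hQ2.symm
    rw [hR']
    field_simp
    ring

lemma prod_eq (r : ℕ) (hr : 2 ≤ r) : ∀ n : ℕ,
    ∏ j ∈ range (n+1), ((r:ℝ) - 1 + j) = ((r:ℝ)-1) * ((n+r-1).choose n) * n.factorial := by
  intro n
  induction n with
  | zero => simp
  | succ n ih =>
    rw [Finset.prod_range_succ, ih]
    have key : (n+r) * (n+r-1).choose n = (n+r).choose (n+1) * (n+1) := by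
      have h := Nat.add_one_mul_choose_eq (n+r-1) n
      have hs : n+r-1+1 = n+r := by omega
      rw [hs] at h
      simpa [Nat.succ_eq_add_one] using h
    have h1 : n+1+r-1 = n+r := by omega
    rw [h1]
    have key' : ((n+r:ℕ):ℝ) * ((n+r-1).choose n : ℝ) = ((n+r).choose (n+1) : ℝ) * ((n+1:ℕ):ℝ) := by
      exact_mod_cast congrArg (Nat.cast : ℕ → ℝ) key
    push_cast at key' ⊢
    rw [Nat.factorial_succ]
    push_cast
    linear_combination ((r:ℝ)-1) * (n.factorial:ℝ) * key'

lemma sum_T (r n : ℕ) (hr : 2 ≤ r) :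
    ∑ j ∈ range (n+1), 1/((r:ℝ) - 1 + j) = H (n+r-1) - H (r-2) := by
  unfold H
  rw [eq_comm, ← Finset.sum_Ico_eq_sub _ (by omega : r-2 ≤ n+r-1)]
  rw [Finset.sum_Ico_eq_sum_range]
  rw [show (n+r-1) - (r-2) = n+1 by omega]
  apply Finset.sum_congr rfl
  intro j _
  congr 1
  have : ((r-2+j : ℕ) : ℝ) = (r:ℝ) - 2 + j := by
    push_cast [Nat.cast_sub (by omega : 2 ≤ r)]; ring
  rw [this]; ring

theorem stmt18 (r n : ℕ) (hr : 2 ≤ r) :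
    ∑ k ∈ Finset.range (n+1), (-1:ℝ)^k * (Nat.choose n k : ℝ) * (k:ℝ) / ((k:ℝ) + r - 1)^2
      = - hh r n / ((Nat.choose (n+r-1) n : ℝ))^2 := by
  set x : ℝ := (r:ℝ) - 1 with hxdef
  have hx : (0:ℝ) < x := by
    have : (2:ℝ) ≤ (r:ℝ) := by exact_mod_cast hr
    simp only [hxdef]; linarith
  have hsplit : ∑ k ∈ Finset.range (n+1), (-1:ℝ)^k * (Nat.choose n k : ℝ) * (k:ℝ) / ((k:ℝ) + r - 1)^2
      = (∑ k ∈ range (n+1), (-1:ℝ)^k * (n.choose k) * (1/(x + k)))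
        - x * ∑ k ∈ range (n+1), (-1:ℝ)^k * (n.choose k) * (1/(x + k)^2) := by
    rw [Finset.mul_sum, ← Finset.sum_sub_distrib]
    apply Finset.sum_congr rfl
    intro k _
    have hk : (0:ℝ) < x + k := by positivity
    rw [show (k:ℝ) + r - 1 = x + k by simp only [hxdef]; ring]
    field_simp
    ring
  rw [hsplit, L1 n x hx, L2 n x hx]
  simp only [hxdef]
  rw [prod_eq r hr n, sum_T r n hr]
  unfold hh
  rw [show (n+r-1).choose (r-1) = (n+r-1).choose n by
    rw [show r-1 = (n+r-1)-n by omega]; exact Nat.choose_symm (by omega)]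
  have hHr : H (r-1) = H (r-2) + 1/((r:ℝ)-1) := by
    unfold H
    rw [show r-1 = (r-2)+1 by omega, Finset.sum_range_succ]
    congr 2
    push_cast [Nat.cast_sub (by omega : 2 ≤ r)]
    ring
  rw [hHr]
  have hC : (0:ℝ) < ((n+r-1).choose n : ℝ) := by
    exact_mod_cast Nat.choose_pos (by omega : n ≤ n+r-1)
  have hfac : (0:ℝ) < (n.factorial : ℝ) := by exact_mod_cast n.factorial_pos
  have hx' : (0:ℝ) < (r:ℝ) - 1 := hx
  field_simp
  ring
end
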